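/- arXiv:1307.1626 — 5 statements merged into one kernel-verified Lean document; each statement's English description precedes it below -/
import Mathlib

section
/- Let (T(t))_{t≥0} be a bounded analytic C₀-semigroup on a complex Banach space X, encoded by: sup_{t≥0}‖T(t)‖ ≤ M₀, and a family (D(t))_{t>0} of bounded operators such that for every x ∈ X the map t ↦ T(t)x is differentiable on (0,∞) with derivative −D(t)x, and sup_{t>0} t‖D(t)‖ ≤ M₁; set M := max(2M₀, M₁). Let φ ∈ Φ with second-moment σ² = |φ″(0+)| and Lévy data (b, μ), and let (ν_t)_{t≥0} be the corresponding subordination measures. Then for all x ∈ X and t > 0: ‖T(t)x − ∫₀^∞ T(s)x dν_t(s)‖ ≤ (C/t)‖x‖, where C = 2(M₀ + 2M₁ + 2M₁²)σ² + 2M[ σ²/φ′(1) + φ′(1)/φ(1) ], with φ′(1) = b + ∫₀^∞ s e^{−s} dμ(s) and φ(1) = b + ∫₀^∞ (1−e^{−s}) dμ(s). -/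
open MeasureTheory Set Complex
open Filter

lemma exp_le_one_sub_add (u : ℝ) (hu : 0 ≤ u) : Real.exp (-u) ≤ 1 - u + u^2/2 := by
  have h : Monotone (fun u : ℝ => 1 - u + u^2/2 - Real.exp (-u)) := by
    apply monotone_of_deriv_nonneg
    · fun_prop
    · intro y
      have hd : HasDerivAt (fun u : ℝ => 1 - u + u^2/2 - Real.exp (-u)) (-1 + y + Real.exp (-y)) y := by
        have h1 : HasDerivAt (fun u : ℝ => Real.exp (-u)) (-Real.exp (-y)) y := by
          simpa [Function.comp_def] using (Real.hasDerivAt_exp (-y)).comp y (hasDerivAt_neg y)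
        have h2 : HasDerivAt (fun u : ℝ => 1 - u + u^2/2) (-1 + y) y := by
          have h3 := ((hasDerivAt_pow 2 y).div_const 2)
          have h4 := ((hasDerivAt_id y).const_sub 1).add h3
          refine h4.congr_deriv ?_
          ring
        simpa [Pi.sub_def] using h2.sub h1
      rw [hd.deriv]
      have := Real.add_one_le_exp (-y)
      linarith
  have := h hu
  simp only [neg_zero, Real.exp_zero] at this
  nlinarith [this]

lemma cubic_le_exp (u : ℝ) (hu : 0 ≤ u) : 1 - u + u^2/2 - u^3/6 ≤ Real.exp (-u) := by
  have h : MonotoneOn (fun u : ℝ => Real.exp (-u) - (1 - u + u^2/2 - u^3/6)) (Ici 0) := by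
    have hder : ∀ y : ℝ, HasDerivAt (fun u : ℝ => Real.exp (-u) - (1 - u + u^2/2 - u^3/6))
        ((1 - y + y^2/2) - Real.exp (-y)) y := by
      intro y
      have h1 : HasDerivAt (fun u : ℝ => Real.exp (-u)) (-Real.exp (-y)) y := by
        simpa [Function.comp_def] using (Real.hasDerivAt_exp (-y)).comp y (hasDerivAt_neg y)
      have h2 : HasDerivAt (fun u : ℝ => 1 - u + u^2/2 - u^3/6) (-1 + y - y^2/2) y := by
        have h3 := ((hasDerivAt_pow 2 y).div_const 2)
        have h4 := ((hasDerivAt_pow 3 y).div_const 6)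
        have h5 := (((hasDerivAt_id y).const_sub 1).add h3).sub h4
        refine h5.congr_deriv ?_
        ring
      have := h1.sub h2
      refine this.congr_deriv ?_
      ring
    apply monotoneOn_of_deriv_nonneg (convex_Ici 0)
    · exact fun y _ => ((hder y).continuousAt.continuousWithinAt)
    · exact fun y _ => ((hder y).differentiableAt.differentiableWithinAt)
    · intro y hy
      rw [interior_Ici] at hy
      rw [(hder y).deriv]
      have := exp_le_one_sub_add y (le_of_lt hy)
      linarith
  have := h (self_mem_Ici) hu hu
  simp only [neg_zero, Real.exp_zero] at this
  nlinarith [this]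

section SG

variable {X : Type*} [NormedAddCommGroup X] [NormedSpace ℂ X]
  (T : ℝ → X →L[ℂ] X) (D : ℝ → X →L[ℂ] X) (M₁ : ℝ)

lemma sg_comp (hTadd : ∀ s t : ℝ, 0 ≤ s → 0 ≤ t → T (s + t) = (T s).comp (T t))
    (hD : ∀ x : X, ∀ t : ℝ, 0 < t → HasDerivAt (fun r => T r x) (-(D t x)) t)
    (x : X) (r u : ℝ) (hr : 0 < r) (hu : 0 ≤ u) : D (r+u) x = D r (T u x) := by
  have h1 : HasDerivAt (fun v => T v (T u x)) (-(D r (T u x))) r := hD (T u x) r hr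
  have h2 : HasDerivAt (fun v : ℝ => T (v+u) x) (-(D (r+u) x)) r := by
    have h3 := hD x (r+u) (by linarith)
    have h4 : HasDerivAt (fun v : ℝ => v + u) 1 r := (hasDerivAt_id r).add_const u
    have h5 := HasDerivAt.scomp r h3 h4
    simpa [Function.comp_def] using h5
  have h5 : (fun v : ℝ => T (v+u) x) =ᶠ[nhds r] (fun v => T v (T u x)) := by
    filter_upwards [Ioi_mem_nhds hr] with v hv
    rw [hTadd v u (le_of_lt hv) hu]; rfl
  have h6 := (h5.hasDerivAt_iff).mp h2
  have := h1.unique h6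
  exact (neg_inj.mp this).symm

lemma sg_deriv2 (hTadd : ∀ s t : ℝ, 0 ≤ s → 0 ≤ t → T (s + t) = (T s).comp (T t))
    (hD : ∀ x : X, ∀ t : ℝ, 0 < t → HasDerivAt (fun r => T r x) (-(D t x)) t)
    (x : X) (a s : ℝ) (ha : 0 < a) (has : a < s) :
    HasDerivAt (fun r => D r x) (-(D a (D (s-a) x))) s := by
  have inner : HasDerivAt (fun r : ℝ => T (r-a) x) (-(D (s-a) x)) s := by
    have h3 := hD x (s-a) (by linarith)
    have h4 : HasDerivAt (fun v : ℝ => v - a) 1 s := (hasDerivAt_id s).sub_const a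
    simpa [Function.comp_def] using HasDerivAt.scomp s h3 h4
  have outer : HasDerivAt (fun r : ℝ => D a (T (r-a) x)) (-(D a (D (s-a) x))) s := by
    have h7 := ((D a).restrictScalars ℝ).hasFDerivAt.comp_hasDerivAt s inner
    simpa [Function.comp_def] using h7
  have heq : (fun r : ℝ => D a (T (r-a) x)) =ᶠ[nhds s] (fun r => D r x) := by
    filter_upwards [Ioi_mem_nhds has] with v hv
    have := sg_comp T D hTadd hD x a (v-a) ha (by simp at hv; linarith)
    simp only [add_sub_cancel] at this
    exact this.symm
  exact (heq.hasDerivAt_iff).mp outer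

lemma sg_lip (hTadd : ∀ s t : ℝ, 0 ≤ s → 0 ≤ t → T (s + t) = (T s).comp (T t))
    (hD : ∀ x : X, ∀ t : ℝ, 0 < t → HasDerivAt (fun r => T r x) (-(D t x)) t)
    (hM1 : ∀ t : ℝ, 0 < t → t * ‖D t‖ ≤ M₁)
    (x : X) (a c : ℝ) (ha : 0 < a) (hac : a ≤ c) :
    ‖D c x - D a x‖ ≤ 4*M₁^2*‖x‖*(1/a - 1/c) := by
  have hM1nn : 0 ≤ M₁ := le_trans (by positivity) (hM1 1 one_pos)
  have hDnorm : ∀ v : ℝ, 0 < v → ‖D v‖ ≤ M₁/v := by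
    intro v hv
    rw [le_div_iff₀ hv]
    linarith [hM1 v hv]
  have hder : ∀ v : ℝ, 0 < v → HasDerivAt (fun r => D r x) (-(D (v/2) (D (v/2) x))) v := by
    intro v hv
    have := sg_deriv2 T D hTadd hD x (v/2) v (by linarith) (by linarith)
    have h2 : v - v/2 = v/2 := by ring
    rwa [h2] at this
  set K := 4*M₁^2*‖x‖ with hK
  have hKnn : 0 ≤ K := by positivity
  have key := image_norm_le_of_norm_deriv_right_le_deriv_boundary'
    (f := fun v => D v x - D a x) (f' := fun v => -(D (v/2) (D (v/2) x)))
    (a := a) (b := c)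
    (B := fun v => K * (1/a - 1/v)) (B' := fun v => K * (1/v^2))
    ?hf ?hf' ?ha ?hB ?hB' ?bound
  · have := key (right_mem_Icc.mpr hac)
    simpa [hK] using this
  case hf =>
    intro v hv
    exact ((hder v (lt_of_lt_of_le ha hv.1)).sub_const (D a x)).continuousAt.continuousWithinAt
  case hf' =>
    intro v hv
    exact ((hder v (lt_of_lt_of_le ha hv.1)).sub_const (D a x)).hasDerivWithinAt
  case ha => simp
  case hB =>
    apply ContinuousOn.mul continuousOn_const
    apply ContinuousOn.sub continuousOn_const
    exact ContinuousOn.div continuousOn_const continuousOn_id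
      (fun v hv => ne_of_gt (lt_of_lt_of_le ha hv.1))
  case hB' =>
    intro v hv
    have hvne : v ≠ 0 := ne_of_gt (lt_of_lt_of_le ha hv.1)
    have h1 : HasDerivAt (fun v : ℝ => v⁻¹) (-(v^2)⁻¹) v := hasDerivAt_inv hvne
    have h2 : HasDerivAt (fun v : ℝ => 1/a - 1/v) ((v^2)⁻¹) v := by
      simpa [one_div] using h1.const_sub (1/a)
    have h3 := h2.const_mul K
    have h4 : K * (v^2)⁻¹ = K * (1/v^2) := by rw [one_div]
    rw [h4] at h3
    exact h3.hasDerivWithinAt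
  case bound =>
    intro v hv
    have hv0 : 0 < v := lt_of_lt_of_le ha hv.1
    have hv2 : 0 < v/2 := by linarith
    have b1 : ‖D (v/2) (D (v/2) x)‖ ≤ ‖D (v/2)‖ * ‖D (v/2) x‖ := (D (v/2)).le_opNorm _
    have b2 : ‖D (v/2) x‖ ≤ (M₁/(v/2)) * ‖x‖ := by
      calc ‖D (v/2) x‖ ≤ ‖D (v/2)‖ * ‖x‖ := (D (v/2)).le_opNorm x
      _ ≤ (M₁/(v/2)) * ‖x‖ := by
        apply mul_le_mul_of_nonneg_right (hDnorm _ hv2) (norm_nonneg x)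
    have b3 : ‖D (v/2)‖ ≤ M₁/(v/2) := hDnorm _ hv2
    have b4 : ‖D (v/2) (D (v/2) x)‖ ≤ (M₁/(v/2)) * ((M₁/(v/2)) * ‖x‖) := by
      calc ‖D (v/2) (D (v/2) x)‖ ≤ ‖D (v/2)‖ * ‖D (v/2) x‖ := b1
      _ ≤ (M₁/(v/2)) * ((M₁/(v/2)) * ‖x‖) := by
        apply mul_le_mul b3 b2 (norm_nonneg _) (by positivity)
    rw [norm_neg]
    calc ‖D (v/2) (D (v/2) x)‖ ≤ (M₁/(v/2)) * ((M₁/(v/2)) * ‖x‖) := b4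
    _ = K * (1/v^2) := by field_simp [K]; ring


lemma sg_taylor
    (hD : ∀ x : X, ∀ t : ℝ, 0 < t → HasDerivAt (fun r => T r x) (-(D t x)) t)
    (hM1nn : 0 ≤ M₁)
    (hlip : ∀ (x : X) (a c : ℝ), 0 < a → a ≤ c →
      ‖D c x - D a x‖ ≤ 4*M₁^2*‖x‖*(1/a - 1/c))
    (x : X) (t s : ℝ) (ht : 0 < t) (hs : 2*t/5 ≤ s) :
    ‖T s x - T t x + (s-t) • D t x‖ ≤ 4*M₁^2*‖x‖*(s-t)^2/t^2 := by
  set K := 4*M₁^2*‖x‖ with hK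
  have hKnn : 0 ≤ K := by positivity
  rcases le_or_gt t s with hts | hts
  · -- case t ≤ s
    have key := image_norm_le_of_norm_deriv_right_le_deriv_boundary'
      (f := fun r => T r x - T t x + (r-t) • D t x)
      (f' := fun r => -(D r x) + D t x) (a := t) (b := s)
      (B := fun r => K/(2*t^2) * (r-t)^2) (B' := fun r => K/t^2 * (r-t))
      ?hf ?hf' ?ha ?hB ?hB' ?bound
    · have h := key (right_mem_Icc.mpr hts)
      have h5 : (s-t)^2/(2*t^2) ≤ (s-t)^2/t^2 :=
        div_le_div_of_nonneg_left (sq_nonneg _) (by positivity) (by nlinarith)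
      calc ‖T s x - T t x + (s-t) • D t x‖ ≤ K/(2*t^2) * (s-t)^2 := h
      _ = K * ((s-t)^2/(2*t^2)) := by ring
      _ ≤ K * ((s-t)^2/t^2) := mul_le_mul_of_nonneg_left h5 hKnn
      _ = K*(s-t)^2/t^2 := by ring
    case hf =>
      intro r hr
      have hr0 : 0 < r := lt_of_lt_of_le ht hr.1
      exact (((hD x r hr0).sub_const (T t x)).add
        (((hasDerivAt_id r).sub_const t).smul_const (D t x))).continuousAt.continuousWithinAt
    case hf' =>
      intro r hr
      have hr0 : 0 < r := lt_of_lt_of_le ht hr.1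
      have h := ((hD x r hr0).sub_const (T t x)).add
        (((hasDerivAt_id r).sub_const t).smul_const (D t x))
      simpa [Pi.add_def] using h.hasDerivWithinAt
    case ha => simp
    case hB =>
      exact (continuousOn_const.mul (((continuousOn_id.sub continuousOn_const).pow 2)))
    case hB' =>
      intro r hr
      have h1 : HasDerivAt (fun r : ℝ => (r-t)^2) (2*(r-t)) r := by
        have := ((hasDerivAt_id r).sub_const t).pow 2
        simpa [Pi.pow_def] using this
      have h2 := h1.const_mul (K/(2*t^2))
      have h3 : K/(2*t^2) * (2*(r-t)) = K/t^2 * (r-t) := by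
        field_simp
      rw [h3] at h2
      exact h2.hasDerivWithinAt
    case bound =>
      intro r hr
      have hr0 : 0 < r := lt_of_lt_of_le ht hr.1
      have h1 : ‖-(D r x) + D t x‖ = ‖D r x - D t x‖ := by
        rw [← norm_neg]; congr 1; abel
      rw [h1]
      have hrt : (0:ℝ) ≤ r - t := by linarith [hr.1]
      calc ‖D r x - D t x‖ ≤ K * (1/t - 1/r) := hlip x t r ht hr.1
      _ ≤ K/t^2 * (r-t) := by
        have h2 : 1/t - 1/r = (r-t)/(t*r) := by field_simp
        have h3 : (r-t)/(t*r) ≤ (r-t)/t^2 :=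
          div_le_div_of_nonneg_left hrt (by positivity) (by nlinarith)
        calc K * (1/t - 1/r) = K * ((r-t)/(t*r)) := by rw [h2]
        _ ≤ K * ((r-t)/t^2) := mul_le_mul_of_nonneg_left h3 hKnn
        _ = K/t^2 * (r-t) := by ring
  · -- case s < t
    have hs0 : 0 < s := lt_of_lt_of_le (by linarith) hs
    have key := image_norm_le_of_norm_deriv_right_le_deriv_boundary'
      (f := fun r => T (s+t-r) x - T t x + (s-r) • D t x)
      (f' := fun r => D (s+t-r) x - D t x) (a := s) (b := t)
      (B := fun r => K * ((r-s)^2/(2*t^2) + (r-s)^3/(3*(2*t/5)*t^2)))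
      (B' := fun r => K * ((r-s)/t^2 + (r-s)^2/((2*t/5)*t^2)))
      ?hf ?hf' ?ha ?hB ?hB' ?bound
    · have h := key (right_mem_Icc.mpr (le_of_lt hts))
      rw [show s+t-t = s from by ring] at h
      have hts' : (0:ℝ) ≤ t - s := by linarith
      have h4 : (t-s)^3/(3*(2*t/5)*t^2) ≤ (t-s)^2/(2*t^2) := by
        rw [div_le_div_iff₀ (by positivity) (by positivity)]
        have h4a : t - s ≤ 3*t/5 := by linarith
        have e : (t-s)^3 ≤ (t-s)^2 * (3*t/5) := by
          calc (t-s)^3 = (t-s)^2*(t-s) := by ring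
          _ ≤ (t-s)^2*(3*t/5) := mul_le_mul_of_nonneg_left h4a (sq_nonneg _)
        nlinarith [mul_le_mul_of_nonneg_right e (le_of_lt (pow_pos ht 2))]
      have h6 : (t-s)^2/(2*t^2) + (t-s)^2/(2*t^2) = (t-s)^2/t^2 := by
        field_simp
        ring
      have h7 : (t-s)^2/(2*t^2) + (t-s)^3/(3*(2*t/5)*t^2) ≤ (s-t)^2/t^2 := by
        rw [show (s-t)^2 = (t-s)^2 from by ring]
        linarith
      calc ‖T s x - T t x + (s-t) • D t x‖
          ≤ K * ((t-s)^2/(2*t^2) + (t-s)^3/(3*(2*t/5)*t^2)) := h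
      _ ≤ K * ((s-t)^2/t^2) := mul_le_mul_of_nonneg_left h7 hKnn
      _ = K*(s-t)^2/t^2 := by ring
    case hf =>
      intro r hr
      have hv0 : 0 < s+t-r := by rcases hr with ⟨h1, h2⟩; linarith
      have hi : HasDerivAt (fun r : ℝ => T (s+t-r) x) (D (s+t-r) x) r := by
        have h3 := hD x (s+t-r) hv0
        have h4 : HasDerivAt (fun v : ℝ => s+t-v) (-1) r := by
          simpa using (hasDerivAt_id r).const_sub (s+t)
        have h5 := HasDerivAt.scomp r h3 h4
        simpa [Function.comp_def] using h5
      have h6 : HasDerivAt (fun r : ℝ => (s-r) • D t x) (-(D t x)) r := by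
        have h7 : HasDerivAt (fun v : ℝ => s - v) (-1) r := by
          simpa using (hasDerivAt_id r).const_sub s
        have := h7.smul_const (D t x)
        simpa using this
      exact ((hi.sub_const (T t x)).add h6).continuousAt.continuousWithinAt
    case hf' =>
      intro r hr
      have hv0 : 0 < s+t-r := by rcases hr with ⟨h1, h2⟩; linarith
      have hi : HasDerivAt (fun r : ℝ => T (s+t-r) x) (D (s+t-r) x) r := by
        have h3 := hD x (s+t-r) hv0
        have h4 : HasDerivAt (fun v : ℝ => s+t-v) (-1) r := by
          simpa using (hasDerivAt_id r).const_sub (s+t)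
        have h5 := HasDerivAt.scomp r h3 h4
        simpa [Function.comp_def] using h5
      have h6 : HasDerivAt (fun r : ℝ => (s-r) • D t x) (-(D t x)) r := by
        have h7 : HasDerivAt (fun v : ℝ => s - v) (-1) r := by
          simpa using (hasDerivAt_id r).const_sub s
        have := h7.smul_const (D t x)
        simpa using this
      have h8 := (hi.sub_const (T t x)).add h6
      have h9 : D (s+t-r) x + -(D t x) = D (s+t-r) x - D t x := by abel
      rw [h9] at h8
      exact h8.hasDerivWithinAt
    case ha => norm_num
    case hB =>
      apply continuousOn_const.mul
      apply ContinuousOn.add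
      · exact ((continuousOn_id.sub continuousOn_const).pow 2).div_const _
      · exact ((continuousOn_id.sub continuousOn_const).pow 3).div_const _
    case hB' =>
      intro r hr
      have h1 : HasDerivAt (fun r : ℝ => (r-s)^2/(2*t^2) + (r-s)^3/(3*(2*t/5)*t^2))
          ((r-s)/t^2 + (r-s)^2/((2*t/5)*t^2)) r := by
        have ha2 := (((hasDerivAt_id r).sub_const s).pow 2).div_const (2*t^2)
        have ha3 := (((hasDerivAt_id r).sub_const s).pow 3).div_const (3*(2*t/5)*t^2)
        have := ha2.add ha3
        refine this.congr_deriv ?_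
        simp only [Nat.cast_ofNat, id_eq]
        field_simp
        ring
      have := h1.const_mul K
      exact this.hasDerivWithinAt
    case bound =>
      intro r hr
      have hv0 : 0 < s+t-r := by rcases hr with ⟨h1, h2⟩; linarith
      have hvt : s+t-r ≤ t := by rcases hr with ⟨h1, h2⟩; linarith
      have hv25 : 2*t/5 ≤ s+t-r := by rcases hr with ⟨h1, h2⟩; linarith
      calc ‖D (s+t-r) x - D t x‖ = ‖D t x - D (s+t-r) x‖ := by rw [norm_sub_rev]
      _ ≤ K * (1/(s+t-r) - 1/t) := hlip x (s+t-r) t hv0 hvt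
      _ ≤ K * ((r-s)/t^2 + (r-s)^2/((2*t/5)*t^2)) := by
        apply mul_le_mul_of_nonneg_left _ hKnn
        set v := s+t-r with hv
        have hrs : r - s = t - v := by rw [hv]; ring
        rw [hrs]
        have h2 : 1/v - 1/t = (t-v)/(v*t) := by
          field_simp
        have h3 : (t-v)/(v*t) - (t-v)/t^2 = (t-v)^2/(v*t^2) := by
          field_simp
        have h4 : (t-v)^2/(v*t^2) ≤ (t-v)^2/((2*t/5)*t^2) := by
          apply div_le_div_of_nonneg_left (by positivity) (by positivity)
          nlinarith [pow_pos ht 2]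
        linarith

end SG

set_option maxHeartbeats 1000000 in
lemma moment_bounds (σ2 t : ℝ) (ht : 0 < t) (hσ2 : 0 ≤ σ2)
    (κ : Measure ℝ) [IsProbabilityMeasure κ]
    (hsupp : ∀ᵐ s ∂κ, 0 ≤ s)
    (φR : ℝ → ℝ)
    (hφ0 : ∀ l : ℝ, 0 < l → 0 ≤ φR l) (hφle : ∀ l : ℝ, 0 < l → φR l ≤ l)
    (hφge : ∀ l : ℝ, 0 < l → l - l^2*σ2/2 ≤ φR l)
    (hL : ∀ l : ℝ, 0 < l → ∫ s, Real.exp (-(l*s)) ∂κ = Real.exp (-(t * φR l))) :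
    Integrable (fun s => s) κ ∧ (∫ s, s ∂κ) = t ∧
      Integrable (fun s : ℝ => s^2) κ ∧ (∫ s, s^2 ∂κ) ≤ t^2 + t*σ2 := by
  have hexp_int : ∀ l : ℝ, 0 < l → Integrable (fun s => Real.exp (-(l*s))) κ := by
    intro l hl
    apply (integrable_const (1:ℝ)).mono'
    · exact (Real.continuous_exp.comp (continuous_const.mul continuous_id).neg).aestronglyMeasurable
    · filter_upwards [hsupp] with s hs
      rw [Real.norm_eq_abs, abs_of_pos (Real.exp_pos _)]
      exact Real.exp_le_one_iff.mpr (by nlinarith)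
  -- first moment machinery
  set f := fun (l : ℝ) (s : ℝ) => (1 - Real.exp (-(l*s)))/l with hf
  have hf_int : ∀ l : ℝ, 0 < l → Integrable (f l) κ := by
    intro l hl
    exact ((integrable_const (1:ℝ)).sub (hexp_int l hl)).div_const l
  have hf_val : ∀ l : ℝ, 0 < l → ∫ s, f l s ∂κ = (1 - Real.exp (-(t * φR l)))/l := by
    intro l hl
    rw [hf]
    simp only
    rw [integral_div, integral_sub (integrable_const 1) (hexp_int l hl), hL l hl]
    simp
  have hf_nonneg : ∀ l : ℝ, 0 < l → 0 ≤ᶠ[ae κ] f l := by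
    intro l hl
    filter_upwards [hsupp] with s hs
    have h2 : Real.exp (-(l*s)) ≤ 1 := Real.exp_le_one_iff.mpr (by nlinarith)
    exact div_nonneg (by linarith) hl.le
  have hf_le : ∀ l : ℝ, 0 < l → ∀ s : ℝ, 0 ≤ s → f l s ≤ s := by
    intro l hl s hs
    rw [hf]
    simp only
    rw [div_le_iff₀ hl]
    have := Real.add_one_le_exp (-(l*s))
    nlinarith
  have hf_ge : ∀ l : ℝ, 0 < l → ∀ s : ℝ, 0 ≤ s → s - l*s^2/2 ≤ f l s := by
    intro l hl s hs
    rw [hf]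
    simp only
    rw [le_div_iff₀ hl]
    have := exp_le_one_sub_add (l*s) (by positivity)
    nlinarith
  have hval_le : ∀ l : ℝ, 0 < l → (1 - Real.exp (-(t * φR l)))/l ≤ t := by
    intro l hl
    rw [div_le_iff₀ hl]
    have h1 := Real.add_one_le_exp (-(t * φR l))
    have h2 := hφle l hl
    have h3 := hφ0 l hl
    nlinarith
  have hval_ge : ∀ l : ℝ, 0 < l → t - l*(t*σ2 + t^2)/2 ≤ (1 - Real.exp (-(t * φR l)))/l := by
    intro l hl
    rw [le_div_iff₀ hl]
    have h1 := exp_le_one_sub_add (t * φR l) (mul_nonneg ht.le (hφ0 l hl))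
    have h2 := hφle l hl
    have h3 := hφ0 l hl
    have h4 := hφge l hl
    have h5 : t * φR l ≤ t * l := mul_le_mul_of_nonneg_left h2 ht.le
    have h6 : (t * φR l)^2 ≤ (t*l)^2 := by nlinarith [mul_nonneg ht.le h3]
    nlinarith [mul_nonneg ht.le h3]
  -- lintegral upper bound for first moment
  have hmeasf : ∀ l : ℝ, Measurable (fun s => ENNReal.ofReal (f l s)) := by
    intro l
    apply Measurable.ennreal_ofReal
    fun_prop
  have hlim1 : ∫⁻ s, ENNReal.ofReal s ∂κ ≤ ENNReal.ofReal t := by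
    have hfatou := lintegral_liminf_le (μ := κ) (u := (atTop : Filter ℕ)) (f := fun (n : ℕ) s => ENNReal.ofReal (f (1/(n+1)) s))
      (fun n => hmeasf _)
    have hae : (fun s => ENNReal.ofReal s) =ᶠ[ae κ]
        (fun s => liminf (fun n : ℕ => ENNReal.ofReal (f (1/(n+1)) s)) atTop) := by
      filter_upwards [hsupp] with s hs
      have htend : Tendsto (fun n : ℕ => f (1/(n+1)) s) atTop (nhds s) := by
        have hl0 : Tendsto (fun n : ℕ => (1:ℝ)/(n+1)) atTop (nhds 0) :=
          tendsto_one_div_add_atTop_nhds_zero_nat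
        have hlow : Tendsto (fun n : ℕ => s - (1/(n+1))*s^2/2) atTop (nhds s) := by
          have := ((hl0.mul_const (s^2)).div_const 2).const_sub s
          simpa using this
        apply tendsto_of_tendsto_of_tendsto_of_le_of_le hlow tendsto_const_nhds
        · intro n
          exact hf_ge (1/(n+1)) (by positivity) s hs
        · intro n
          exact hf_le (1/(n+1)) (by positivity) s hs
      have := (ENNReal.tendsto_ofReal htend).liminf_eq
      exact this.symm
    rw [lintegral_congr_ae hae]
    refine le_trans hfatou ?_
    have hub : ∀ n : ℕ, (∫⁻ s, ENNReal.ofReal (f (1/(n+1)) s) ∂κ) ≤ ENNReal.ofReal t := by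
      intro n
      have hl : (0:ℝ) < 1/(n+1) := by positivity
      rw [← ofReal_integral_eq_lintegral_ofReal (hf_int _ hl) (hf_nonneg _ hl)]
      rw [hf_val _ hl]
      exact ENNReal.ofReal_le_ofReal (hval_le _ hl)
    calc liminf (fun n : ℕ => ∫⁻ s, ENNReal.ofReal (f (1/(n+1)) s) ∂κ) atTop
        ≤ liminf (fun _ : ℕ => ENNReal.ofReal t) atTop := liminf_le_liminf (Eventually.of_forall hub)
    _ = ENNReal.ofReal t := liminf_const _
  have hint1 : Integrable (fun s : ℝ => s) κ := by
    refine ⟨measurable_id.aestronglyMeasurable, ?_⟩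
    rw [hasFiniteIntegral_iff_ofReal hsupp]
    exact lt_of_le_of_lt hlim1 ENNReal.ofReal_lt_top
  have hval1le : (∫ s, s ∂κ) ≤ t := by
    rw [integral_eq_lintegral_of_nonneg_ae hsupp measurable_id.aestronglyMeasurable]
    calc (∫⁻ s, ENNReal.ofReal s ∂κ).toReal ≤ (ENNReal.ofReal t).toReal :=
      ENNReal.toReal_mono ENNReal.ofReal_ne_top hlim1
    _ = t := ENNReal.toReal_ofReal ht.le
  have hval1ge : t ≤ ∫ s, s ∂κ := by
    by_contra hcon
    push_neg at hcon
    set I := ∫ s, s ∂κ with hI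
    set K' := (t*σ2 + t^2)/2 with hK'
    have hK'nn : 0 ≤ K' := by positivity
    set l := (t - I)/(K' + 1) with hl
    have hl0 : 0 < l := by
      apply div_pos (by linarith) (by linarith)
    have h1 : t - l*K' ≤ I := by
      calc t - l*K' = t - l*(t*σ2 + t^2)/2 := by rw [hK']; ring
      _ ≤ (1 - Real.exp (-(t * φR l)))/l := hval_ge l hl0
      _ = ∫ s, f l s ∂κ := (hf_val l hl0).symm
      _ ≤ ∫ s, s ∂κ := by
        apply integral_mono_ae (hf_int l hl0) hint1
        filter_upwards [hsupp] with s hs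
        exact hf_le l hl0 s hs
    have h2 : l * K' < t - I := by
      rw [hl]
      rw [div_mul_eq_mul_div, div_lt_iff₀ (by linarith)]
      nlinarith
    linarith
  have hval1 : (∫ s, s ∂κ) = t := le_antisymm hval1le hval1ge
  -- second moment
  set g := fun (l : ℝ) (s : ℝ) => 2*(Real.exp (-(l*s)) - 1 + l*s)/l^2 with hg
  have hg_nonneg : ∀ l : ℝ, 0 < l → ∀ s : ℝ, 0 ≤ s → 0 ≤ g l s := by
    intro l hl s hs
    rw [hg]
    simp only
    have := Real.add_one_le_exp (-(l*s))
    apply div_nonneg (by nlinarith) (by positivity)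
  have hg_le : ∀ l : ℝ, 0 < l → ∀ s : ℝ, 0 ≤ s → g l s ≤ s^2 := by
    intro l hl s hs
    rw [hg]; simp only
    rw [div_le_iff₀ (by positivity : (0:ℝ) < l^2)]
    have := exp_le_one_sub_add (l*s) (by positivity)
    nlinarith
  have hg_ge : ∀ l : ℝ, 0 < l → ∀ s : ℝ, 0 ≤ s → s^2 - l*s^3/3 ≤ g l s := by
    intro l hl s hs
    rw [hg]; simp only
    rw [le_div_iff₀ (by positivity : (0:ℝ) < l^2)]
    have := cubic_le_exp (l*s) (by positivity)
    nlinarith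
  have hg_lin : ∀ l : ℝ, 0 < l → ∀ s : ℝ, 0 ≤ s → g l s ≤ (2/l)*s := by
    intro l hl s hs
    rw [hg]; simp only
    rw [div_le_iff₀ (by positivity : (0:ℝ) < l^2)]
    have h1 : Real.exp (-(l*s)) ≤ 1 := Real.exp_le_one_iff.mpr (by nlinarith)
    have h2 : 2/l*s*l^2 = 2*l*s := by field_simp
    rw [h2]
    nlinarith
  have hg_int : ∀ l : ℝ, 0 < l → Integrable (g l) κ := by
    intro l hl
    apply (hint1.const_mul (2/l)).mono'
    · apply Continuous.aestronglyMeasurable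
      fun_prop
    · filter_upwards [hsupp] with s hs
      rw [Real.norm_eq_abs, _root_.abs_of_nonneg (hg_nonneg l hl s hs)]
      exact hg_lin l hl s hs
  have hg_val : ∀ l : ℝ, 0 < l →
      ∫ s, g l s ∂κ = 2*(Real.exp (-(t * φR l)) - 1 + l*t)/l^2 := by
    intro l hl
    rw [hg]
    simp only
    have e1 : ∫ s, 2*(Real.exp (-(l*s)) - 1 + l*s)/l^2 ∂κ
        = (2/l^2) * ∫ s, (Real.exp (-(l*s)) - 1 + l*s) ∂κ := by
      rw [← integral_const_mul]
      congr 1; funext s; ring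
    have i1 : Integrable (fun s : ℝ => Real.exp (-(l*s)) - 1) κ :=
      (hexp_int l hl).sub (integrable_const 1)
    have i2 : Integrable (fun s : ℝ => l * s) κ := hint1.const_mul l
    rw [e1, integral_add i1 i2, integral_sub (hexp_int l hl) (integrable_const 1),
      integral_const_mul, hval1, hL l hl]
    have : ∫ (_ : ℝ), (1:ℝ) ∂κ = 1 := by simp
    rw [this]
    ring
  have hg_val_le : ∀ l : ℝ, 0 < l → 2*(Real.exp (-(t * φR l)) - 1 + l*t)/l^2 ≤ t^2 + t*σ2 := by
    intro l hl
    rw [div_le_iff₀ (by positivity : (0:ℝ) < l^2)]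
    have h1 := exp_le_one_sub_add (t * φR l) (mul_nonneg ht.le (hφ0 l hl))
    have h2 := hφle l hl
    have h3 := hφ0 l hl
    have h4 := hφge l hl
    have h5 : t * φR l ≤ t * l := mul_le_mul_of_nonneg_left h2 ht.le
    have h6 : (t * φR l)^2 ≤ (t*l)^2 := by nlinarith [mul_nonneg ht.le h3]
    have h7 : t * (l - l^2*σ2/2) ≤ t * φR l := mul_le_mul_of_nonneg_left h4 ht.le
    nlinarith
  have hmeasg : ∀ l : ℝ, Measurable (fun s => ENNReal.ofReal (g l s)) := by
    intro l
    apply Measurable.ennreal_ofReal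
    fun_prop
  have hlim2 : ∫⁻ s, ENNReal.ofReal (s^2) ∂κ ≤ ENNReal.ofReal (t^2 + t*σ2) := by
    have hfatou := lintegral_liminf_le (μ := κ) (u := (atTop : Filter ℕ)) (f := fun (n : ℕ) s => ENNReal.ofReal (g (1/(n+1)) s))
      (fun n => hmeasg _)
    have hae : (fun s : ℝ => ENNReal.ofReal (s^2)) =ᶠ[ae κ]
        (fun s => liminf (fun n : ℕ => ENNReal.ofReal (g (1/(n+1)) s)) atTop) := by
      filter_upwards [hsupp] with s hs
      have htend : Tendsto (fun n : ℕ => g (1/(n+1)) s) atTop (nhds (s^2)) := by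
        have hl0 : Tendsto (fun n : ℕ => (1:ℝ)/(n+1)) atTop (nhds 0) :=
          tendsto_one_div_add_atTop_nhds_zero_nat
        have hlow : Tendsto (fun n : ℕ => s^2 - (1/(n+1))*s^3/3) atTop (nhds (s^2)) := by
          have := ((hl0.mul_const (s^3)).div_const 3).const_sub (s^2)
          simpa using this
        apply tendsto_of_tendsto_of_tendsto_of_le_of_le hlow tendsto_const_nhds
        · intro n
          exact hg_ge (1/(n+1)) (by positivity) s hs
        · intro n
          exact hg_le (1/(n+1)) (by positivity) s hs
      exact (ENNReal.tendsto_ofReal htend).liminf_eq.symm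
    rw [lintegral_congr_ae hae]
    refine le_trans hfatou ?_
    have hub : ∀ n : ℕ, (∫⁻ s, ENNReal.ofReal (g (1/(n+1)) s) ∂κ) ≤ ENNReal.ofReal (t^2 + t*σ2) := by
      intro n
      have hl : (0:ℝ) < 1/(n+1) := by positivity
      have hgnn : 0 ≤ᶠ[ae κ] g (1/(n+1)) := by
        filter_upwards [hsupp] with s hs
        exact hg_nonneg _ hl s hs
      rw [← ofReal_integral_eq_lintegral_ofReal (hg_int _ hl) hgnn]
      rw [hg_val _ hl]
      exact ENNReal.ofReal_le_ofReal (hg_val_le _ hl)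
    calc liminf (fun n : ℕ => ∫⁻ s, ENNReal.ofReal (g (1/(n+1)) s) ∂κ) atTop
        ≤ liminf (fun _ : ℕ => ENNReal.ofReal (t^2 + t*σ2)) atTop :=
          liminf_le_liminf (Eventually.of_forall hub)
    _ = ENNReal.ofReal (t^2 + t*σ2) := liminf_const _
  have hsupp2 : ∀ᵐ s ∂κ, 0 ≤ s^2 := Eventually.of_forall (fun s => sq_nonneg s)
  have hint2 : Integrable (fun s : ℝ => s^2) κ := by
    refine ⟨(measurable_id.pow_const 2).aestronglyMeasurable, ?_⟩
    rw [hasFiniteIntegral_iff_ofReal hsupp2]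
    exact lt_of_le_of_lt hlim2 ENNReal.ofReal_lt_top
  have hval2 : (∫ s, s^2 ∂κ) ≤ t^2 + t*σ2 := by
    rw [integral_eq_lintegral_of_nonneg_ae hsupp2 (measurable_id.pow_const 2).aestronglyMeasurable]
    calc (∫⁻ s, ENNReal.ofReal (s^2) ∂κ).toReal ≤ (ENNReal.ofReal (t^2 + t*σ2)).toReal :=
      ENNReal.toReal_mono ENNReal.ofReal_ne_top hlim2
    _ = t^2 + t*σ2 := ENNReal.toReal_ofReal (by positivity)
  exact ⟨hint1, hval1, hint2, hval2⟩

set_option maxHeartbeats 2000000 in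
/-- Theorem 6.10: for a bounded analytic `C₀`-semigroup `T` (encoded by `‖T(t)‖ ≤ M₀`,
`D(t) = A T(t)` with `d/dt T(t)x = -D(t)x`, `t‖D(t)‖ ≤ M₁`; `M = max(2M₀, M₁)`) and
`φ ∈ Φ` with Lévy data `(b, μ)`, `σ² = ∫ s² dμ`, and subordination measures `ν_t`:
`‖T(t)x - e^(-tφ(A))x‖ ≤ (C/t)‖x‖` for all `x ∈ X`, `t > 0`, with
`C = 2(M₀ + 2M₁ + 2M₁²)σ² + 2M[σ²/φ′(1) + φ′(1)/φ(1)]`. -/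
theorem statement14 {X : Type*} [NormedAddCommGroup X] [NormedSpace ℂ X] [CompleteSpace X]
    (T : ℝ → X →L[ℂ] X) (M₀ M₁ : ℝ)
    (hT0 : T 0 = 1)
    (hTadd : ∀ s t : ℝ, 0 ≤ s → 0 ≤ t → T (s + t) = (T s).comp (T t))
    (hTcont : ∀ x : X, ContinuousOn (fun t => T t x) (Ici 0))
    (hM0 : ∀ t : ℝ, 0 ≤ t → ‖T t‖ ≤ M₀)
    (D : ℝ → X →L[ℂ] X)
    (hD : ∀ x : X, ∀ t : ℝ, 0 < t → HasDerivAt (fun r => T r x) (-(D t x)) t)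
    (hM1 : ∀ t : ℝ, 0 < t → t * ‖D t‖ ≤ M₁)
    (b : ℝ) (hb : 0 ≤ b) (μ : Measure ℝ)
    (hμ1 : IntegrableOn (fun s : ℝ => s) (Ioi 0) μ)
    (hμ2 : IntegrableOn (fun s : ℝ => s ^ 2) (Ioi 0) μ)
    (hmom : b + ∫ s in Ioi (0:ℝ), s ∂μ = 1)
    (ν : ℝ → Measure ℝ)
    (hνsupp : ∀ r : ℝ, 0 ≤ r → (ν r) (Iio 0) = 0)
    (hνsub : ∀ r : ℝ, 0 ≤ r → (ν r) univ ≤ 1)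
    (hνL : ∀ r : ℝ, 0 ≤ r → ∀ z : ℂ, 0 ≤ z.re →
      (∫ s in Ici (0:ℝ), Complex.exp (-z * s) ∂ν r) =
        Complex.exp (-(r:ℂ) *
          ((b:ℂ) * z + ∫ s in Ioi (0:ℝ), (1 - Complex.exp (-z * s)) ∂μ)))
    (x : X) (t : ℝ) (ht : 0 < t) :
    ‖T t x - ∫ s in Ici (0:ℝ), T s x ∂ν t‖ ≤
      ((2 * (M₀ + 2 * M₁ + 2 * M₁ ^ 2) * (∫ s in Ioi (0:ℝ), s ^ 2 ∂μ) +
          2 * max (2 * M₀) M₁ *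
            ((∫ s in Ioi (0:ℝ), s ^ 2 ∂μ) /
                (b + ∫ s in Ioi (0:ℝ), s * Real.exp (-s) ∂μ) +
              (b + ∫ s in Ioi (0:ℝ), s * Real.exp (-s) ∂μ) /
                (b + ∫ s in Ioi (0:ℝ), (1 - Real.exp (-s)) ∂μ))) / t) * ‖x‖ := by
  have hM0nn : 0 ≤ M₀ := le_trans (norm_nonneg _) (hM0 0 le_rfl)
  have hM1nn : 0 ≤ M₁ := le_trans (by positivity) (hM1 1 one_pos)
  set σ2 := ∫ s in Ioi (0:ℝ), s ^ 2 ∂μ with hσ2def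
  have hσ2 : 0 ≤ σ2 := setIntegral_nonneg measurableSet_Ioi (fun s _ => sq_nonneg s)
  haveI hfin : IsFiniteMeasure (ν t) :=
    ⟨lt_of_le_of_lt (hνsub t ht.le) ENNReal.one_lt_top⟩
  set κ : Measure ℝ := (ν t).restrict (Ici 0) with hκdef
  have hsupp : ∀ᵐ s ∂κ, 0 ≤ s := ae_restrict_mem measurableSet_Ici
  -- φR and its properties
  set φR : ℝ → ℝ := fun l => b*l + ∫ s in Ioi (0:ℝ), (1 - Real.exp (-(l*s))) ∂μ with hφRdef
  have hexp_ptwise : ∀ l s : ℝ, 0 ≤ l → 0 ≤ s → 0 ≤ 1 - Real.exp (-(l*s)) ∧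
      1 - Real.exp (-(l*s)) ≤ l*s := by
    intro l s hl hs
    constructor
    · have : Real.exp (-(l*s)) ≤ 1 := Real.exp_le_one_iff.mpr (by nlinarith)
      linarith
    · have := Real.add_one_le_exp (-(l*s))
      linarith
  have hμint_exp : ∀ l : ℝ, 0 ≤ l →
      IntegrableOn (fun s => 1 - Real.exp (-(l*s))) (Ioi 0) μ := by
    intro l hl
    apply Integrable.mono' (hμ1.const_mul l)
    · exact (Continuous.aestronglyMeasurable (by fun_prop))
    · filter_upwards [ae_restrict_mem measurableSet_Ioi] with s hs
      obtain ⟨h1, h2⟩ := hexp_ptwise l s hl (le_of_lt hs)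
      rw [Real.norm_eq_abs, _root_.abs_of_nonneg h1]
      exact h2
  have hφ0 : ∀ l : ℝ, 0 < l → 0 ≤ φR l := by
    intro l hl
    apply add_nonneg (mul_nonneg hb hl.le)
    apply setIntegral_nonneg measurableSet_Ioi
    intro s hs
    exact (hexp_ptwise l s hl.le (le_of_lt hs)).1
  have hφle : ∀ l : ℝ, 0 < l → φR l ≤ l := by
    intro l hl
    have key : (∫ s in Ioi (0:ℝ), (1 - Real.exp (-(l*s))) ∂μ) ≤ ∫ s in Ioi (0:ℝ), l*s ∂μ := by
      apply setIntegral_mono_on (hμint_exp l hl.le) (hμ1.const_mul l) measurableSet_Ioi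
      intro s hs
      exact (hexp_ptwise l s hl.le (le_of_lt hs)).2
    have e1 : (∫ s in Ioi (0:ℝ), l*s ∂μ) = l * ∫ s in Ioi (0:ℝ), s ∂μ := integral_const_mul l _
    rw [hφRdef]
    simp only
    rw [e1] at key
    nlinarith [key, hmom]
  have hφge : ∀ l : ℝ, 0 < l → l - l^2*σ2/2 ≤ φR l := by
    intro l hl
    have hquad : IntegrableOn (fun s : ℝ => l*s - l^2/2*s^2) (Ioi 0) μ := by
      have := (hμ1.const_mul l).sub (hμ2.const_mul (l^2/2))
      exact this
    have key : (∫ s in Ioi (0:ℝ), (l*s - l^2/2*s^2) ∂μ)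
        ≤ ∫ s in Ioi (0:ℝ), (1 - Real.exp (-(l*s))) ∂μ := by
      apply setIntegral_mono_on hquad (hμint_exp l hl.le) measurableSet_Ioi
      intro s hs
      have := exp_le_one_sub_add (l*s) (mul_nonneg hl.le (le_of_lt hs))
      nlinarith
    have e1 : (∫ s in Ioi (0:ℝ), (l*s - l^2/2*s^2) ∂μ)
        = l * (∫ s in Ioi (0:ℝ), s ∂μ) - l^2/2 * σ2 := by
      rw [integral_sub (hμ1.const_mul l) (hμ2.const_mul (l^2/2)), integral_const_mul,
        integral_const_mul]
    rw [hφRdef]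
    simp only
    rw [e1] at key
    nlinarith [key, hmom]
  -- real Laplace transform identity
  have hLap : ∀ l : ℝ, 0 ≤ l →
      (∫ s in Ici (0:ℝ), Real.exp (-(l*s)) ∂ν t) = Real.exp (-(t * φR l)) := by
    intro l hl
    have h := hνL t ht.le (l:ℂ) (by simp [hl])
    have e1 : (∫ s in Ici (0:ℝ), Complex.exp (-(l:ℂ) * s) ∂ν t)
        = ((∫ s in Ici (0:ℝ), Real.exp (-(l*s)) ∂ν t : ℝ) : ℂ) := by
      have e1' : (∫ s in Ici (0:ℝ), ((Real.exp (-(l*s)) : ℝ) : ℂ) ∂ν t)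
          = ((∫ s in Ici (0:ℝ), Real.exp (-(l*s)) ∂ν t : ℝ) : ℂ) := integral_ofReal
      rw [← e1']
      apply integral_congr_ae
      apply Eventually.of_forall
      intro s
      show Complex.exp (-(l:ℂ) * s) = ((Real.exp (-(l*s)) : ℝ) : ℂ)
      rw [Complex.ofReal_exp]
      congr 1
      push_cast
      ring
    have e2 : (∫ s in Ioi (0:ℝ), (1 - Complex.exp (-(l:ℂ) * s)) ∂μ)
        = ((∫ s in Ioi (0:ℝ), (1 - Real.exp (-(l*s))) ∂μ : ℝ) : ℂ) := by
      have e2' : (∫ s in Ioi (0:ℝ), ((1 - Real.exp (-(l*s)) : ℝ) : ℂ) ∂μ)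
          = ((∫ s in Ioi (0:ℝ), (1 - Real.exp (-(l*s))) ∂μ : ℝ) : ℂ) := integral_ofReal
      rw [← e2']
      apply integral_congr_ae
      apply Eventually.of_forall
      intro s
      show (1 - Complex.exp (-(l:ℂ) * s) : ℂ) = ((1 - Real.exp (-(l*s)) : ℝ) : ℂ)
      push_cast [Complex.ofReal_exp]
      ring_nf
    rw [e1, e2] at h
    have e3 : -(t:ℂ) * ((b:ℂ) * (l:ℂ) + ((∫ s in Ioi (0:ℝ), (1 - Real.exp (-(l*s))) ∂μ : ℝ) : ℂ))
        = ((-(t * φR l) : ℝ) : ℂ) := by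
      rw [hφRdef]
      push_cast
      ring
    rw [e3, ← Complex.ofReal_exp] at h
    exact_mod_cast h
  -- κ is a probability measure
  haveI hprob : IsProbabilityMeasure κ := by
    constructor
    have h0 := hLap 0 le_rfl
    have hφR0 : φR 0 = 0 := by
      rw [hφRdef]
      simp
    rw [hφR0, mul_zero, neg_zero, Real.exp_zero] at h0
    simp only [zero_mul, neg_zero, Real.exp_zero] at h0
    rw [integral_const] at h0
    simp only [smul_eq_mul, mul_one] at h0
    have h2 := (ENNReal.toReal_eq_one_iff _).mp h0
    rw [hκdef, Measure.restrict_apply_univ]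
    rwa [Measure.restrict_apply MeasurableSet.univ, univ_inter] at h2
  obtain ⟨hint1, hval1, hint2, hval2⟩ := moment_bounds σ2 t ht hσ2 κ hsupp φR hφ0 hφle
    hφge (fun l hl => hLap l hl.le)
  -- A and B facts
  set A := b + ∫ s in Ioi (0:ℝ), s * Real.exp (-s) ∂μ with hAdef
  set Bq := b + ∫ s in Ioi (0:ℝ), (1 - Real.exp (-s)) ∂μ with hBdef
  have hAint : IntegrableOn (fun s : ℝ => s * Real.exp (-s)) (Ioi 0) μ := by
    apply Integrable.mono' hμ1 (Continuous.aestronglyMeasurable (by fun_prop))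
    filter_upwards [ae_restrict_mem measurableSet_Ioi] with s hs
    have he1 : Real.exp (-s) ≤ 1 := Real.exp_le_one_iff.mpr (by simp; linarith [mem_Ioi.mp hs])
    rw [Real.norm_eq_abs, _root_.abs_of_nonneg (mul_nonneg (le_of_lt hs) (Real.exp_pos _).le)]
    nlinarith [mem_Ioi.mp hs]
  have hIA_nonneg : 0 ≤ ∫ s in Ioi (0:ℝ), s * Real.exp (-s) ∂μ :=
    setIntegral_nonneg measurableSet_Ioi (fun s hs => mul_nonneg (le_of_lt hs) (Real.exp_pos _).le)
  have hA_pos : 0 < A := by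
    rcases lt_or_ge 0 A with h | h
    · exact h
    · exfalso
      have hb0 : b = 0 := by rw [hAdef] at h; linarith
      have hI0 : (∫ s in Ioi (0:ℝ), s * Real.exp (-s) ∂μ) = 0 := by
        rw [hAdef] at h; linarith
      have hae : (fun s : ℝ => s * Real.exp (-s)) =ᶠ[ae (μ.restrict (Ioi 0))] 0 := by
        apply (integral_eq_zero_iff_of_nonneg_ae ?_ hAint).mp hI0
        filter_upwards [ae_restrict_mem measurableSet_Ioi] with s hs
        exact mul_nonneg (le_of_lt hs) (Real.exp_pos _).le
      have hfalse : ∀ᵐ (s : ℝ) ∂μ.restrict (Ioi 0), False := by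
        filter_upwards [hae, ae_restrict_mem measurableSet_Ioi] with s h1 h2
        have := mul_pos (mem_Ioi.mp h2) (Real.exp_pos (-s))
        rw [Pi.zero_apply] at h1
        linarith [h1 ▸ this]
      have hzero : μ.restrict (Ioi 0) = 0 := by
        rwa [← MeasureTheory.ae_eq_bot, ← Filter.eventually_false_iff_eq_bot]
      have : (∫ s in Ioi (0:ℝ), s ∂μ) = 0 := by
        rw [show (∫ s in Ioi (0:ℝ), s ∂μ) = ∫ s, s ∂(μ.restrict (Ioi 0)) from rfl, hzero]
        simp
      rw [this, hb0] at hmom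
      norm_num at hmom
  have hA_le1 : A ≤ 1 := by
    have key : (∫ s in Ioi (0:ℝ), s * Real.exp (-s) ∂μ) ≤ ∫ s in Ioi (0:ℝ), s ∂μ := by
      apply setIntegral_mono_on hAint hμ1 measurableSet_Ioi
      intro s hs
      have he1 : Real.exp (-s) ≤ 1 := Real.exp_le_one_iff.mpr (by simp; linarith [mem_Ioi.mp hs])
      nlinarith [mem_Ioi.mp hs]
    rw [hAdef]; linarith [hmom]
  have hBint : IntegrableOn (fun s : ℝ => 1 - Real.exp (-s)) (Ioi 0) μ := by
    have h := hμint_exp 1 zero_le_one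
    have e : (fun s : ℝ => 1 - Real.exp (-(1*s))) = fun s => 1 - Real.exp (-s) := by
      funext s; rw [one_mul]
    rwa [e] at h
  have hB_pos : 0 < Bq := by
    have hIB_nonneg : 0 ≤ ∫ s in Ioi (0:ℝ), (1 - Real.exp (-s)) ∂μ := by
      apply setIntegral_nonneg measurableSet_Ioi
      intro s hs
      have : Real.exp (-s) ≤ 1 := Real.exp_le_one_iff.mpr (by simp; linarith [mem_Ioi.mp hs])
      linarith
    rcases lt_or_ge 0 Bq with h | h
    · exact h
    · exfalso
      have hb0 : b = 0 := by rw [hBdef] at h; linarith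
      have hI0 : (∫ s in Ioi (0:ℝ), (1 - Real.exp (-s)) ∂μ) = 0 := by
        rw [hBdef] at h; linarith
      have hae : (fun s : ℝ => 1 - Real.exp (-s)) =ᶠ[ae (μ.restrict (Ioi 0))] 0 := by
        apply (integral_eq_zero_iff_of_nonneg_ae ?_ hBint).mp hI0
        filter_upwards [ae_restrict_mem measurableSet_Ioi] with s hs
        have : Real.exp (-s) ≤ 1 := Real.exp_le_one_iff.mpr (by simp; linarith [mem_Ioi.mp hs])
        simp only [Pi.zero_apply]
        linarith
      have hfalse : ∀ᵐ (s : ℝ) ∂μ.restrict (Ioi 0), False := by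
        filter_upwards [hae, ae_restrict_mem measurableSet_Ioi] with s h1 h2
        have hlt : Real.exp (-s) < 1 := by
          rw [Real.exp_lt_one_iff]
          simp; exact mem_Ioi.mp h2
        rw [Pi.zero_apply] at h1
        linarith
      have hzero : μ.restrict (Ioi 0) = 0 := by
        rwa [← MeasureTheory.ae_eq_bot, ← Filter.eventually_false_iff_eq_bot]
      have : (∫ s in Ioi (0:ℝ), s ∂μ) = 0 := by
        rw [show (∫ s in Ioi (0:ℝ), s ∂μ) = ∫ s, s ∂(μ.restrict (Ioi 0)) from rfl, hzero]
        simp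
      rw [this, hb0] at hmom
      norm_num at hmom
  -- variance
  have hst_int : Integrable (fun s : ℝ => (s-t)^2) κ := by
    have e : (fun s : ℝ => (s-t)^2) = fun s => s^2 - (2*t)*s + t^2 := by funext s; ring
    rw [e]
    exact (hint2.sub (hint1.const_mul (2*t))).add (integrable_const _)
  have hvar : (∫ s, (s-t)^2 ∂κ) ≤ t*σ2 := by
    have e2 : (fun s : ℝ => (s-t)^2) = fun s => s^2 - (2*t)*s + t^2 := by funext s; ring
    have i1 : Integrable (fun s : ℝ => s^2 - (2*t)*s) κ := hint2.sub (hint1.const_mul (2*t))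
    have i2 : Integrable (fun s : ℝ => (2*t)*s) κ := hint1.const_mul (2*t)
    have e : (∫ s, (s-t)^2 ∂κ) = (∫ s, s^2 ∂κ) - 2*t*t + t^2 := by
      rw [e2, integral_add i1 (integrable_const _),
        integral_sub hint2 i2, integral_const_mul, hval1, integral_const]
      simp [measure_univ]
    rw [e]
    nlinarith [hval2]
  -- integrability of T s x
  have hTmeas : AEStronglyMeasurable (fun s => T s x) κ :=
    ContinuousOn.aestronglyMeasurable (hTcont x) measurableSet_Ici
  have hTb : ∀ᵐ s ∂κ, ‖T s x‖ ≤ M₀ * ‖x‖ := by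
    filter_upwards [hsupp] with s hs
    calc ‖T s x‖ ≤ ‖T s‖ * ‖x‖ := (T s).le_opNorm x
    _ ≤ M₀ * ‖x‖ := mul_le_mul_of_nonneg_right (hM0 s hs) (norm_nonneg x)
  have hTx_int : Integrable (fun s => T s x) κ := (integrable_const (M₀*‖x‖)).mono' hTmeas hTb
  have hsub_int : Integrable (fun s => T t x - T s x) κ := (integrable_const _).sub hTx_int
  have hErr : T t x - (∫ s, T s x ∂κ) = ∫ s, (T t x - T s x) ∂κ := by
    rw [integral_sub (integrable_const _) hTx_int, integral_const]
    simp [measure_univ]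
  set c0 := 2*t/5 with hc0
  have hc0pos : 0 < c0 := by rw [hc0]; positivity
  have hc0t : c0 < t := by rw [hc0]; linarith
  have hsplitE : (∫ s, (T t x - T s x) ∂κ)
      = (∫ s in Iio c0, (T t x - T s x) ∂κ) + ∫ s in Ici c0, (T t x - T s x) ∂κ := by
    have e := integral_add_compl (measurableSet_Iio (a := c0)) hsub_int
    rw [compl_Iio] at e
    exact e.symm
  -- piece 1
  have hP1 : ‖∫ s in Iio c0, (T t x - T s x) ∂κ‖ ≤ 2*M₀*‖x‖ * (κ (Iio c0)).toReal := by
    have hbd : ∀ᵐ s ∂κ.restrict (Iio c0), ‖T t x - T s x‖ ≤ 2*M₀*‖x‖ := by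
      filter_upwards [ae_restrict_of_ae hTb] with s h1
      have h2 : ‖T t x‖ ≤ M₀ * ‖x‖ := by
        calc ‖T t x‖ ≤ ‖T t‖ * ‖x‖ := (T t).le_opNorm x
        _ ≤ M₀ * ‖x‖ := mul_le_mul_of_nonneg_right (hM0 t ht.le) (norm_nonneg x)
      calc ‖T t x - T s x‖ ≤ ‖T t x‖ + ‖T s x‖ := norm_sub_le _ _
      _ ≤ 2*M₀*‖x‖ := by linarith
    have h := norm_integral_le_of_norm_le_const hbd
    rwa [measureReal_def, Measure.restrict_apply_univ] at h
  have hmass : (κ (Iio c0)).toReal ≤ (25/(9*t)) * σ2 := by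
    have h1 : (κ (Iio c0)).toReal = ∫ s in Iio c0, (1:ℝ) ∂κ := by
      rw [integral_const, measureReal_def, Measure.restrict_apply_univ]
      simp
    have h2 : (∫ s in Iio c0, (1:ℝ) ∂κ) ≤ ∫ s in Iio c0, (s-t)^2/((3*t/5)^2) ∂κ := by
      apply setIntegral_mono_on ((integrable_const _).integrableOn)
        ((hst_int.div_const _).integrableOn) measurableSet_Iio
      intro s hs
      rw [le_div_iff₀ (by positivity)]
      have : s < c0 := hs
      rw [hc0] at this
      nlinarith
    have h3 : (∫ s in Iio c0, (s-t)^2/((3*t/5)^2) ∂κ) ≤ ∫ s, (s-t)^2/((3*t/5)^2) ∂κ :=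
      setIntegral_le_integral (hst_int.div_const _)
        (Eventually.of_forall fun s => by positivity)
    have h4 : (∫ s, (s-t)^2/((3*t/5)^2) ∂κ) = (∫ s, (s-t)^2 ∂κ)/((3*t/5)^2) :=
      integral_div _ _
    have h5 : (∫ s, (s-t)^2 ∂κ)/((3*t/5)^2) ≤ (t*σ2)/((3*t/5)^2) := by gcongr
    have h6 : (t*σ2)/((3*t/5)^2) = (25/(9*t))*σ2 := by
      field_simp
      ring
    rw [h1]
    linarith
  -- decomposition on Ici c0
  set R : ℝ → X := fun s => T s x - T t x + (s-t) • D t x with hRdef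
  have hsmul_int : Integrable (fun s : ℝ => (s-t) • D t x) κ :=
    ((hint1.sub (integrable_const t)).smul_const _)
  have hR_int : Integrable R κ := (hTx_int.sub (integrable_const _)).add hsmul_int
  have hIci : (∫ s in Ici c0, (T t x - T s x) ∂κ)
      = (∫ s in Ici c0, (s-t) ∂κ) • D t x - ∫ s in Ici c0, R s ∂κ := by
    rw [← integral_smul_const]
    rw [← integral_sub (hsmul_int.integrableOn) (hR_int.integrableOn)]
    apply integral_congr_ae (Eventually.of_forall fun s => ?_)
    show T t x - T s x = (s-t) • D t x - (T s x - T t x + (s-t) • D t x)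
    abel
  have hstint : Integrable (fun s : ℝ => s - t) κ := hint1.sub (integrable_const t)
  have hsum0 : (∫ s in Iio c0, (s-t) ∂κ) + (∫ s in Ici c0, (s-t) ∂κ) = 0 := by
    have e := integral_add_compl (measurableSet_Iio (a := c0)) hstint
    rw [compl_Iio] at e
    rw [e, integral_sub hint1 (integrable_const t), hval1, integral_const]
    simp [measure_univ]
  have habs1 : |∫ s in Iio c0, (s-t) ∂κ| ≤ (5/3) * σ2 := by
    have ha0 : |∫ s in Iio c0, (s-t) ∂κ| ≤ ∫ s in Iio c0, |s-t| ∂κ := by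
      have := norm_integral_le_integral_norm (μ := κ.restrict (Iio c0)) (fun s : ℝ => s - t)
      simpa [Real.norm_eq_abs] using this
    have ha1 : (∫ s in Iio c0, |s-t| ∂κ) ≤ ∫ s in Iio c0, (s-t)^2/(3*t/5) ∂κ := by
      apply setIntegral_mono_on (hstint.abs.integrableOn)
        ((hst_int.div_const _).integrableOn) measurableSet_Iio
      intro s hs
      have hsc : s < c0 := hs
      rw [hc0] at hsc
      rw [abs_of_nonpos (by linarith), le_div_iff₀ (by positivity)]
      nlinarith
    have ha2 : (∫ s in Iio c0, (s-t)^2/(3*t/5) ∂κ) ≤ ∫ s, (s-t)^2/(3*t/5) ∂κ :=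
      setIntegral_le_integral (hst_int.div_const _)
        (Eventually.of_forall fun s => by positivity)
    have ha3 : (∫ s, (s-t)^2/(3*t/5) ∂κ) = (∫ s, (s-t)^2 ∂κ)/(3*t/5) := integral_div _ _
    have ha4 : (∫ s, (s-t)^2 ∂κ)/(3*t/5) ≤ (t*σ2)/(3*t/5) := by gcongr
    have ha5 : (t*σ2)/(3*t/5) = (5/3)*σ2 := by
      field_simp
    linarith
  have habs2 : |∫ s in Ici c0, (s-t) ∂κ| ≤ (5/3)*σ2 := by
    have e : (∫ s in Ici c0, (s-t) ∂κ) = -(∫ s in Iio c0, (s-t) ∂κ) := by linarith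
    rw [e, abs_neg]
    exact habs1
  have hDt : ‖D t x‖ ≤ (M₁/t)*‖x‖ := by
    calc ‖D t x‖ ≤ ‖D t‖*‖x‖ := (D t).le_opNorm x
    _ ≤ (M₁/t)*‖x‖ := by
      apply mul_le_mul_of_nonneg_right _ (norm_nonneg x)
      rw [le_div_iff₀ ht]
      linarith [hM1 t ht]
  have hP2 : ‖(∫ s in Ici c0, (s-t) ∂κ) • D t x‖ ≤ (5/3)*σ2*((M₁/t)*‖x‖) := by
    rw [norm_smul, Real.norm_eq_abs]
    apply mul_le_mul habs2 hDt (norm_nonneg _) (by positivity)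
  -- piece 3
  have hlip := fun (y : X) (a c : ℝ) (ha : 0 < a) (hac : a ≤ c) =>
    sg_lip T D M₁ hTadd hD hM1 y a c ha hac
  have htay := sg_taylor T D M₁ hD hM1nn hlip
  have hg_int : Integrable (fun s : ℝ => 4*M₁^2*‖x‖*(s-t)^2/t^2) κ := by
    have e : (fun s : ℝ => 4*M₁^2*‖x‖*(s-t)^2/t^2)
        = fun s => (4*M₁^2*‖x‖/t^2) * (s-t)^2 := by funext s; ring
    rw [e]
    exact hst_int.const_mul _
  have hP3 : ‖∫ s in Ici c0, R s ∂κ‖ ≤ (4*M₁^2*‖x‖/t^2) * (t*σ2) := by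
    have h1 : ‖∫ s in Ici c0, R s ∂κ‖ ≤ ∫ s in Ici c0, 4*M₁^2*‖x‖*(s-t)^2/t^2 ∂κ := by
      apply norm_integral_le_of_norm_le (hg_int.integrableOn)
      filter_upwards [ae_restrict_mem measurableSet_Ici] with s hs
      have hs' : 2*t/5 ≤ s := by rw [← hc0]; exact hs
      exact htay x t s ht hs'
    have h2 : (∫ s in Ici c0, 4*M₁^2*‖x‖*(s-t)^2/t^2 ∂κ) ≤ ∫ s, 4*M₁^2*‖x‖*(s-t)^2/t^2 ∂κ :=
      setIntegral_le_integral hg_int (Eventually.of_forall fun s => by positivity)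
    have h3 : (∫ s, 4*M₁^2*‖x‖*(s-t)^2/t^2 ∂κ) = (4*M₁^2*‖x‖/t^2) * ∫ s, (s-t)^2 ∂κ := by
      rw [← integral_const_mul]
      congr 1
      funext s
      ring
    have h4 : (4*M₁^2*‖x‖/t^2) * (∫ s, (s-t)^2 ∂κ) ≤ (4*M₁^2*‖x‖/t^2)*(t*σ2) :=
      mul_le_mul_of_nonneg_left hvar (by positivity)
    linarith
  -- assemble
  have hfinal : ‖T t x - ∫ s, T s x ∂κ‖
      ≤ 2*M₀*‖x‖*((25/(9*t))*σ2) + (5/3)*σ2*((M₁/t)*‖x‖) + (4*M₁^2*‖x‖/t^2)*(t*σ2) := by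
    rw [hErr, hsplitE, hIci]
    have htri : ‖(∫ s in Iio c0, (T t x - T s x) ∂κ)
        + ((∫ s in Ici c0, (s-t) ∂κ) • D t x - ∫ s in Ici c0, R s ∂κ)‖
        ≤ ‖∫ s in Iio c0, (T t x - T s x) ∂κ‖
          + ‖(∫ s in Ici c0, (s-t) ∂κ) • D t x‖ + ‖∫ s in Ici c0, R s ∂κ‖ := by
      calc ‖(∫ s in Iio c0, (T t x - T s x) ∂κ)
          + ((∫ s in Ici c0, (s-t) ∂κ) • D t x - ∫ s in Ici c0, R s ∂κ)‖
          ≤ ‖∫ s in Iio c0, (T t x - T s x) ∂κ‖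
            + ‖(∫ s in Ici c0, (s-t) ∂κ) • D t x - ∫ s in Ici c0, R s ∂κ‖ := norm_add_le _ _
      _ ≤ _ := by
        have := norm_sub_le ((∫ s in Ici c0, (s-t) ∂κ) • D t x) (∫ s in Ici c0, R s ∂κ)
        linarith
    have hP1' : ‖∫ s in Iio c0, (T t x - T s x) ∂κ‖ ≤ 2*M₀*‖x‖*((25/(9*t))*σ2) := by
      calc ‖∫ s in Iio c0, (T t x - T s x) ∂κ‖ ≤ 2*M₀*‖x‖ * (κ (Iio c0)).toReal := hP1
      _ ≤ 2*M₀*‖x‖*((25/(9*t))*σ2) := mul_le_mul_of_nonneg_left hmass (by positivity)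
    linarith
  -- final arithmetic
  have hMx0 : 0 ≤ max (2*M₀) M₁ := le_trans (by linarith) (le_max_left (2*M₀) M₁)
  have hterm1 : σ2 ≤ σ2/A := by
    rw [le_div_iff₀ hA_pos]
    nlinarith
  have hterm2 : 0 ≤ A/Bq := div_nonneg hA_pos.le hB_pos.le
  have hC : (6*M₀+4*M₁+4*M₁^2)*σ2
      ≤ 2*(M₀+2*M₁+2*M₁^2)*σ2 + 2*max (2*M₀) M₁ * (σ2/A + A/Bq) := by
    have h1 : 2*max (2*M₀) M₁ * σ2 ≤ 2*max (2*M₀) M₁ * (σ2/A + A/Bq) := by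
      apply mul_le_mul_of_nonneg_left _ (by linarith)
      linarith
    have h2 : 4*M₀*σ2 ≤ 2*max (2*M₀) M₁ * σ2 := by
      have := le_max_left (2*M₀) M₁
      nlinarith
    nlinarith
  have hEq : 2*M₀*‖x‖*((25/(9*t))*σ2) + (5/3)*σ2*((M₁/t)*‖x‖) + (4*M₁^2*‖x‖/t^2)*(t*σ2)
      = (((50/9)*M₀ + (5/3)*M₁ + 4*M₁^2)*σ2/t)*‖x‖ := by
    field_simp
    ring
  have hcoef : ((50/9)*M₀ + (5/3)*M₁ + 4*M₁^2)*σ2 ≤ (6*M₀+4*M₁+4*M₁^2)*σ2 := by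
    nlinarith
  calc ‖T t x - ∫ s, T s x ∂κ‖
      ≤ 2*M₀*‖x‖*((25/(9*t))*σ2) + (5/3)*σ2*((M₁/t)*‖x‖) + (4*M₁^2*‖x‖/t^2)*(t*σ2) := hfinal
  _ = (((50/9)*M₀ + (5/3)*M₁ + 4*M₁^2)*σ2/t)*‖x‖ := hEq
  _ ≤ ((2*(M₀+2*M₁+2*M₁^2)*σ2 + 2*max (2*M₀) M₁ * (σ2/A + A/Bq))/t)*‖x‖ := by
    gcongr
    linarith
end

section
/- Let (T(t))_{t≥0} be a bounded C₀-semigroup on a complex Banach space X with sup_{t≥0}‖T(t)‖ ≤ M₀. Let B and C be nonzero bounded linear operators on X such that T(t)(Cx) = Cx − ∫₀^t T(r)(Bx) dr for all x ∈ X and t ≥ 0 (i.e. C = A^{−1}B where −A is the generator), and set a := ‖B‖ > 0, b := ‖C‖ > 0. Let f be a Stieltjes function, f(z) = c₀/z + c₁ + ∫₀^∞ (z+τ)^{−1} dρ(τ) with c₀, c₁ ≥ 0 and ρ a positive measure on (0,∞) with ∫₀^∞ (1+τ)^{−1} dρ(τ) < ∞. Then for every x ∈ X: ‖c₀·Cx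 + c₁·Bx + ∫₀^∞ (∫₀^∞ e^{−τs} T(s)(Bx) ds) dρ(τ)‖ ≤ 2(1+M₀) a f(a/b) ‖x‖. -/
open MeasureTheory Set Complex Topology Filter

lemma laplace_bound {X : Type*} [NormedAddCommGroup X] [NormedSpace ℝ X] [CompleteSpace X]
    (u F : ℝ → X) (K L : ℝ) (hK : 0 ≤ K)
    (hucont : ContinuousOn u (Ici 0))
    (hFcont : ContinuousOn F (Ici 0))
    (hFdef : ∀ t : ℝ, 0 ≤ t → (∫ r in (0:ℝ)..t, u r) = F t)
    (hFK : ∀ t : ℝ, 0 ≤ t → ‖F t‖ ≤ K)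
    (huL : ∀ t : ℝ, 0 ≤ t → ‖u t‖ ≤ L)
    {τ : ℝ} (hτ : 0 < τ) :
    ‖∫ s in Ioi (0:ℝ), Real.exp (-τ * s) • u s‖ ≤ min K (L / τ) := by
  have hL : 0 ≤ L := le_trans (norm_nonneg _) (huL 0 le_rfl)
  have hexpc : Continuous (fun s : ℝ => Real.exp (-τ * s)) := by
    exact Real.continuous_exp.comp (continuous_const.mul continuous_id)
  have hmeas : AEStronglyMeasurable (fun s => Real.exp (-τ * s) • u s)
      (volume.restrict (Ioi (0:ℝ))) :=
    (hexpc.continuousOn.smul (hucont.mono Ioi_subset_Ici_self)).aestronglyMeasurable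
      measurableSet_Ioi
  have hbd : ∀ᵐ s ∂(volume.restrict (Ioi (0:ℝ))),
      ‖Real.exp (-τ * s) • u s‖ ≤ L * Real.exp (-τ * s) := by
    refine (ae_restrict_iff' measurableSet_Ioi).2 (Filter.Eventually.of_forall fun s hs => ?_)
    rw [norm_smul, Real.norm_eq_abs, Real.abs_exp, mul_comm]
    exact mul_le_mul_of_nonneg_right (huL s (le_of_lt hs)) (Real.exp_pos _).le
  have hbint : IntegrableOn (fun s : ℝ => L * Real.exp (-τ * s)) (Ioi 0) :=
    (exp_neg_integrableOn_Ioi 0 hτ).const_mul L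
  have hInt : IntegrableOn (fun s => Real.exp (-τ * s) • u s) (Ioi 0) :=
    Integrable.mono' hbint hmeas hbd
  have hexpIoi : (∫ s in Ioi (0:ℝ), Real.exp (-τ * s)) = 1 / τ := by
    have : (∫ s in Ioi (0:ℝ), Real.exp (-τ * s))
        = (∫ s in Ioi (0:ℝ), (fun y => Real.exp (-y)) (τ * s)) := by
      congr 1; ext s; rw [neg_mul]
    rw [this, integral_comp_mul_left_Ioi (fun y => Real.exp (-y)) 0 hτ, mul_zero,
      integral_exp_neg_Ioi, neg_zero, Real.exp_zero, smul_eq_mul, mul_one, one_div]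
  refine le_min ?_ ?_
  · -- bound by K via integration by parts on [0, N] and limit
    have hF0 : F 0 = 0 := by rw [← hFdef 0 le_rfl, intervalIntegral.integral_same]
    have hFderiv : ∀ s : ℝ, s ∈ Ioi (0:ℝ) → HasDerivAt F (u s) s := by
      intro s hs
      have hsub : uIcc (0:ℝ) s ⊆ Ici 0 := by
        rw [uIcc_of_le (le_of_lt hs)]; exact Icc_subset_Ici_self
      have hint : IntervalIntegrable u volume 0 s := (hucont.mono hsub).intervalIntegrable
      have hmeas' : StronglyMeasurableAtFilter u (𝓝 s) :=
        ContinuousOn.stronglyMeasurableAtFilter isOpen_Ioi (hucont.mono Ioi_subset_Ici_self) s hs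
      have hca : ContinuousAt u s :=
        (hucont.mono Ioi_subset_Ici_self).continuousAt (Ioi_mem_nhds hs)
      have h1 := intervalIntegral.integral_hasDerivAt_right hint hmeas' hca
      exact h1.congr_of_eventuallyEq
        (Filter.eventuallyEq_of_mem (Ioi_mem_nhds hs) fun t ht => (hFdef t (le_of_lt ht)).symm)
    have hN : ∀ N : ℝ, 0 ≤ N → ‖∫ s in (0:ℝ)..N, Real.exp (-τ * s) • u s‖ ≤ K := by
      intro N hN0
      set g : ℝ → X := fun s => Real.exp (-τ * s) • F s with hg
      set g' : ℝ → X := fun s => Real.exp (-τ * s) • u s - (τ * Real.exp (-τ * s)) • F s with hg'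
      have hgderiv : ∀ s ∈ Ioo (0:ℝ) N, HasDerivWithinAt g (g' s) (Ioi s) s := by
        intro s hs
        have h0 : HasDerivAt (fun t : ℝ => -τ * t) (-τ) s := by
          simpa using (hasDerivAt_id s).const_mul (-τ)
        have hc : HasDerivAt (fun t => Real.exp (-τ * t)) (-τ * Real.exp (-τ * s)) s := by
          simpa [mul_comm] using h0.exp
        have h2 := hc.smul (hFderiv s hs.1)
        have h3 : Real.exp (-τ * s) • u s + (-τ * Real.exp (-τ * s)) • F s = g' s := by
          simp only [hg', neg_mul, neg_smul]; abel
        rw [← h3]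
        exact h2.hasDerivWithinAt
      have hIccIci : Icc (0:ℝ) N ⊆ Ici 0 := Icc_subset_Ici_self
      have huIcc : uIcc (0:ℝ) N = Icc 0 N := uIcc_of_le hN0
      have hgcont : ContinuousOn g (Icc 0 N) :=
        hexpc.continuousOn.smul (hFcont.mono hIccIci)
      have hucontN : ContinuousOn (fun s => Real.exp (-τ * s) • u s) (Icc 0 N) :=
        hexpc.continuousOn.smul (hucont.mono hIccIci)
      have hFcontN : ContinuousOn (fun s => (τ * Real.exp (-τ * s)) • F s) (Icc 0 N) :=
        (continuous_const.mul hexpc).continuousOn.smul (hFcont.mono hIccIci)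
      have h1int : IntervalIntegrable (fun s => Real.exp (-τ * s) • u s) volume 0 N := by
        apply ContinuousOn.intervalIntegrable; rwa [huIcc]
      have h2int : IntervalIntegrable (fun s => (τ * Real.exp (-τ * s)) • F s) volume 0 N := by
        apply ContinuousOn.intervalIntegrable; rwa [huIcc]
      have hg'int : IntervalIntegrable g' volume 0 N := h1int.sub h2int
      have hftc : ∫ s in (0:ℝ)..N, g' s = g N - g 0 :=
        intervalIntegral.integral_eq_sub_of_hasDeriv_right_of_le hN0 hgcont hgderiv hg'int
      have hg0 : g 0 = 0 := by simp [hg, hF0]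
      have hsplit : ∫ s in (0:ℝ)..N, Real.exp (-τ * s) • u s
          = g N + ∫ s in (0:ℝ)..N, (τ * Real.exp (-τ * s)) • F s := by
        have : ∫ s in (0:ℝ)..N, Real.exp (-τ * s) • u s
            = ∫ s in (0:ℝ)..N, (g' s + (τ * Real.exp (-τ * s)) • F s) :=
          intervalIntegral.integral_congr fun s _ => by simp only [hg']; abel
        rw [this, intervalIntegral.integral_add hg'int h2int, hftc, hg0, sub_zero]
      have hIexp : ∫ s in (0:ℝ)..N, Real.exp (-τ * s)
          = (1 - Real.exp (-τ * N)) / τ := by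
        rw [intervalIntegral.integral_comp_mul_left Real.exp (neg_ne_zero.mpr hτ.ne'),
          integral_exp, mul_zero, Real.exp_zero, smul_eq_mul]
        rw [inv_neg, div_eq_mul_inv]
        ring
      have hbound2 : ‖∫ s in (0:ℝ)..N, (τ * Real.exp (-τ * s)) • F s‖
          ≤ K * (1 - Real.exp (-τ * N)) := by
        calc ‖∫ s in (0:ℝ)..N, (τ * Real.exp (-τ * s)) • F s‖
            ≤ ∫ s in (0:ℝ)..N, ‖(τ * Real.exp (-τ * s)) • F s‖ :=
              intervalIntegral.norm_integral_le_integral_norm hN0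
          _ ≤ ∫ s in (0:ℝ)..N, K * (τ * Real.exp (-τ * s)) := by
              apply intervalIntegral.integral_mono_on hN0 h2int.norm
              · exact (continuous_const.mul (continuous_const.mul hexpc)).intervalIntegrable 0 N
              · intro s hs
                rw [norm_smul, Real.norm_eq_abs, abs_mul, Real.abs_exp,
                  abs_of_pos hτ, mul_comm K]
                exact mul_le_mul_of_nonneg_left (hFK s hs.1)
                  (by positivity)
          _ = K * (1 - Real.exp (-τ * N)) := by
              rw [intervalIntegral.integral_const_mul, intervalIntegral.integral_const_mul,
                hIexp]
              field_simp
      have hexpN : Real.exp (-τ * N) ≤ 1 := by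
        apply Real.exp_le_one_iff.mpr; nlinarith
      have hgN : ‖g N‖ ≤ Real.exp (-τ * N) * K := by
        rw [hg, norm_smul, Real.norm_eq_abs, Real.abs_exp]
        exact mul_le_mul_of_nonneg_left (hFK N hN0) (Real.exp_pos _).le
      calc ‖∫ s in (0:ℝ)..N, Real.exp (-τ * s) • u s‖
          ≤ ‖g N‖ + ‖∫ s in (0:ℝ)..N, (τ * Real.exp (-τ * s)) • F s‖ := by
            rw [hsplit]; exact norm_add_le _ _
        _ ≤ Real.exp (-τ * N) * K + K * (1 - Real.exp (-τ * N)) := add_le_add hgN hbound2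
        _ = K := by ring
    have htend : Filter.Tendsto (fun N => ∫ s in (0:ℝ)..N, Real.exp (-τ * s) • u s)
        Filter.atTop (nhds (∫ s in Ioi (0:ℝ), Real.exp (-τ * s) • u s)) :=
      intervalIntegral_tendsto_integral_Ioi 0 hInt Filter.tendsto_id
    exact le_of_tendsto htend.norm
      (Filter.eventually_atTop.2 ⟨0, fun N hN0 => hN N hN0⟩)
  · -- bound by L / τ
    calc ‖∫ s in Ioi (0:ℝ), Real.exp (-τ * s) • u s‖
        ≤ ∫ s in Ioi (0:ℝ), L * Real.exp (-τ * s) :=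
          norm_integral_le_of_norm_le hbint hbd
      _ = L / τ := by rw [MeasureTheory.integral_const_mul, hexpIoi]; ring


/-- Theorem 6.12: for a bounded `C₀`-semigroup `T` with `‖T(t)‖ ≤ M₀`, nonzero bounded
operators `B`, `C` with `C = A⁻¹B` (encoded by `T(t)Cx = Cx - ∫₀^t T(r)Bx dr`), `a=‖B‖`,
`b=‖C‖`, and a Stieltjes function `f(z) = c₀/z + c₁ + ∫ (z+τ)⁻¹ dρ(τ)`:
`‖f(A)Bx‖ ≤ 2(1+M₀) a f(a/b) ‖x‖` for all `x`. -/
theorem statement15 {X : Type*} [NormedAddCommGroup X] [NormedSpace ℂ X] [CompleteSpace X]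
    (T : ℝ → X →L[ℂ] X) (M₀ : ℝ)
    (hT0 : T 0 = 1)
    (hTadd : ∀ s t : ℝ, 0 ≤ s → 0 ≤ t → T (s + t) = (T s).comp (T t))
    (hTcont : ∀ x : X, ContinuousOn (fun t => T t x) (Ici 0))
    (hM0 : ∀ t : ℝ, 0 ≤ t → ‖T t‖ ≤ M₀)
    (B C : X →L[ℂ] X) (hB : B ≠ 0) (hC : C ≠ 0)
    (hBC : ∀ x : X, ∀ t : ℝ, 0 ≤ t → T t (C x) = C x - ∫ r in (0:ℝ)..t, T r (B x))
    (c₀ c₁ : ℝ) (hc₀ : 0 ≤ c₀) (hc₁ : 0 ≤ c₁)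
    (ρ : Measure ℝ)
    (hρ : IntegrableOn (fun τ : ℝ => (1 + τ)⁻¹) (Ioi 0) ρ)
    (x : X) :
    ‖c₀ • C x + c₁ • B x +
        ∫ τ in Ioi (0:ℝ), (∫ s in Ioi (0:ℝ), Real.exp (-τ * s) • T s (B x)) ∂ρ‖ ≤
      2 * (1 + M₀) * ‖B‖ *
        (c₀ / (‖B‖ / ‖C‖) + c₁ + ∫ τ in Ioi (0:ℝ), (‖B‖ / ‖C‖ + τ)⁻¹ ∂ρ) * ‖x‖ := by
  have hb : (0:ℝ) < ‖C‖ := norm_pos_iff.mpr hC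
  have ha : (0:ℝ) < ‖B‖ := norm_pos_iff.mpr hB
  have hBx : ∃ y : X, B y ≠ 0 := by
    by_contra h; push_neg at h
    exact hB (ContinuousLinearMap.ext fun y => by simp [h y])
  obtain ⟨y₀, hy₀⟩ := hBx
  haveI : Nontrivial X := ⟨⟨B y₀, 0, hy₀⟩⟩
  have hM1 : 1 ≤ M₀ := by
    have h1 : ‖T 0‖ = 1 := by
      rw [hT0, ContinuousLinearMap.one_def, ContinuousLinearMap.norm_id]
    rw [← h1]; exact hM0 0 le_rfl
  have hM0' : (0:ℝ) ≤ M₀ := le_trans zero_le_one hM1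
  have hu : ContinuousOn (fun s => T s (B x)) (Ici 0) := hTcont (B x)
  have hFc : ContinuousOn (fun s => C x - T s (C x)) (Ici 0) :=
    continuousOn_const.sub (hTcont (C x))
  have hFdef : ∀ t : ℝ, 0 ≤ t → (∫ r in (0:ℝ)..t, T r (B x)) = C x - T t (C x) := by
    intro t ht; rw [hBC x t ht, sub_sub_cancel]
  have hFK : ∀ t : ℝ, 0 ≤ t → ‖C x - T t (C x)‖ ≤ (1 + M₀) * (‖C‖ * ‖x‖) := by
    intro t ht
    have h1 : ‖C x‖ ≤ ‖C‖ * ‖x‖ := C.le_opNorm x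
    have h2 : ‖T t (C x)‖ ≤ M₀ * (‖C‖ * ‖x‖) := by
      calc ‖T t (C x)‖ ≤ ‖T t‖ * ‖C x‖ := (T t).le_opNorm _
        _ ≤ M₀ * (‖C‖ * ‖x‖) := mul_le_mul (hM0 t ht) h1 (norm_nonneg _) hM0'
    calc ‖C x - T t (C x)‖ ≤ ‖C x‖ + ‖T t (C x)‖ := norm_sub_le _ _
      _ ≤ (1 + M₀) * (‖C‖ * ‖x‖) := by nlinarith
  have huL : ∀ t : ℝ, 0 ≤ t → ‖T t (B x)‖ ≤ M₀ * (‖B‖ * ‖x‖) := by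
    intro t ht
    calc ‖T t (B x)‖ ≤ ‖T t‖ * ‖B x‖ := (T t).le_opNorm _
      _ ≤ M₀ * (‖B‖ * ‖x‖) :=
        mul_le_mul (hM0 t ht) (B.le_opNorm x) (norm_nonneg _) hM0'
  have key : ∀ τ ∈ Ioi (0:ℝ),
      ‖∫ s in Ioi (0:ℝ), Real.exp (-τ * s) • T s (B x)‖
        ≤ (2 * (1 + M₀) * ‖B‖ * ‖x‖) * (‖B‖ / ‖C‖ + τ)⁻¹ := by
    intro τ hτ
    have hτ' : (0:ℝ) < τ := hτ
    have hmin := laplace_bound (fun s => T s (B x)) (fun s => C x - T s (C x))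
      ((1 + M₀) * (‖C‖ * ‖x‖)) (M₀ * (‖B‖ * ‖x‖)) (by positivity) hu hFc hFdef hFK huL hτ'
    have hden : (0:ℝ) < ‖B‖ / ‖C‖ + τ := by positivity
    rcases le_or_gt τ (‖B‖ / ‖C‖) with hcase | hcase
    · refine le_trans (le_trans hmin (min_le_left _ _)) ?_
      rw [← div_eq_mul_inv, le_div_iff₀ hden]
      have hba : ‖C‖ * (‖B‖ / ‖C‖) = ‖B‖ := by field_simp
      have hbt : ‖C‖ * τ ≤ ‖C‖ * (‖B‖ / ‖C‖) := mul_le_mul_of_nonneg_left hcase hb.le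
      nlinarith [norm_nonneg x, mul_nonneg hM0' (norm_nonneg x)]
    · refine le_trans (le_trans hmin (min_le_right _ _)) ?_
      rw [div_le_iff₀ hτ']
      have h1 : M₀ * (‖B‖ / ‖C‖ + τ) ≤ 2 * (1 + M₀) * τ := by nlinarith
      have h2 := mul_le_mul_of_nonneg_left h1 (mul_nonneg ha.le (norm_nonneg x))
      calc M₀ * (‖B‖ * ‖x‖)
          = (‖B‖ * ‖x‖) * M₀ := by ring
        _ ≤ (2 * (1 + M₀) * ‖B‖ * ‖x‖) * (‖B‖ / ‖C‖ + τ)⁻¹ * τ := by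
            rw [← div_eq_mul_inv]
            rw [div_mul_eq_mul_div, le_div_iff₀ hden]
            nlinarith
  have hGcont : ContinuousOn
      (fun τ : ℝ => ∫ s in Ioi (0:ℝ), Real.exp (-τ * s) • T s (B x)) (Ioi 0) := by
    intro τ₀ hτ₀
    have hτ₀' : (0:ℝ) < τ₀ := hτ₀
    refine ContinuousAt.continuousWithinAt ?_
    apply MeasureTheory.continuousAt_of_dominated
      (bound := fun s => (M₀ * (‖B‖ * ‖x‖)) * Real.exp (-(τ₀ / 2) * s))
    · exact Filter.Eventually.of_forall fun τ =>
        ((Real.continuous_exp.comp (continuous_const.mul continuous_id)).continuousOn.smul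
          (hu.mono Ioi_subset_Ici_self)).aestronglyMeasurable measurableSet_Ioi
    · filter_upwards [Ioi_mem_nhds (half_lt_self hτ₀')] with τ hτhalf
      refine (ae_restrict_iff' measurableSet_Ioi).2 (Filter.Eventually.of_forall fun s hs => ?_)
      have hs' : (0:ℝ) < s := hs
      have hτh : τ₀ / 2 < τ := hτhalf
      rw [norm_smul, Real.norm_eq_abs, Real.abs_exp]
      have hee : Real.exp (-τ * s) ≤ Real.exp (-(τ₀ / 2) * s) :=
        Real.exp_le_exp.2 (by nlinarith)
      calc Real.exp (-τ * s) * ‖T s (B x)‖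
          ≤ Real.exp (-(τ₀ / 2) * s) * (M₀ * (‖B‖ * ‖x‖)) :=
            mul_le_mul hee (huL s hs'.le) (norm_nonneg _) (Real.exp_pos _).le
        _ = M₀ * (‖B‖ * ‖x‖) * Real.exp (-(τ₀ / 2) * s) := by ring
    · exact (exp_neg_integrableOn_Ioi 0 (half_pos hτ₀')).const_mul _
    · exact Filter.Eventually.of_forall fun s =>
        (((Real.continuous_exp.comp (continuous_neg.mul continuous_const)).smul
          continuous_const).continuousAt)
  have hGmeas : AEStronglyMeasurable
      (fun τ : ℝ => ∫ s in Ioi (0:ℝ), Real.exp (-τ * s) • T s (B x))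
      (ρ.restrict (Ioi 0)) := hGcont.aestronglyMeasurable measurableSet_Ioi
  set c : ℝ := max 1 (‖C‖ / ‖B‖) with hcdef
  have hφbound : ∀ τ ∈ Ioi (0:ℝ), (‖B‖ / ‖C‖ + τ)⁻¹ ≤ c * (1 + τ)⁻¹ := by
    intro τ hτ
    have hτ' : (0:ℝ) < τ := hτ
    have hden : (0:ℝ) < ‖B‖ / ‖C‖ + τ := by positivity
    have h1τ : (0:ℝ) < 1 + τ := by linarith
    rw [inv_eq_one_div, inv_eq_one_div, ← mul_div_assoc, mul_one, div_le_div_iff₀ hden h1τ]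
    have hc1 : (1:ℝ) ≤ c := le_max_left _ _
    have hc2 : ‖C‖ / ‖B‖ ≤ c := le_max_right _ _
    have h3 : (1:ℝ) ≤ c * (‖B‖ / ‖C‖) := by
      calc (1:ℝ) = (‖C‖ / ‖B‖) * (‖B‖ / ‖C‖) := by field_simp
        _ ≤ c * (‖B‖ / ‖C‖) := mul_le_mul_of_nonneg_right hc2 (by positivity)
    nlinarith [mul_le_mul_of_nonneg_right hc1 hτ'.le]
  have hφint : IntegrableOn (fun τ : ℝ => (‖B‖ / ‖C‖ + τ)⁻¹) (Ioi 0) ρ := by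
    apply Integrable.mono' (hρ.const_mul c)
    · refine ContinuousOn.aestronglyMeasurable ?_ measurableSet_Ioi
      refine ContinuousOn.inv₀ (continuousOn_const.add continuousOn_id) fun τ hτ => ?_
      have : (0:ℝ) < τ := hτ
      positivity
    · refine (ae_restrict_iff' measurableSet_Ioi).2 (Filter.Eventually.of_forall fun τ hτ => ?_)
      have hτ' : (0:ℝ) < τ := hτ
      rw [Real.norm_eq_abs, abs_of_pos (by positivity)]
      exact hφbound τ hτ
  have hGint : IntegrableOn
      (fun τ : ℝ => ∫ s in Ioi (0:ℝ), Real.exp (-τ * s) • T s (B x)) (Ioi 0) ρ := by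
    apply Integrable.mono' (hφint.const_mul (2 * (1 + M₀) * ‖B‖ * ‖x‖)) hGmeas
    exact (ae_restrict_iff' measurableSet_Ioi).2 (Filter.Eventually.of_forall key)
  have hIbound : ‖∫ τ in Ioi (0:ℝ), (∫ s in Ioi (0:ℝ), Real.exp (-τ * s) • T s (B x)) ∂ρ‖
      ≤ (2 * (1 + M₀) * ‖B‖ * ‖x‖) * ∫ τ in Ioi (0:ℝ), (‖B‖ / ‖C‖ + τ)⁻¹ ∂ρ := by
    calc ‖∫ τ in Ioi (0:ℝ), (∫ s in Ioi (0:ℝ), Real.exp (-τ * s) • T s (B x)) ∂ρ‖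
        ≤ ∫ τ in Ioi (0:ℝ), (2 * (1 + M₀) * ‖B‖ * ‖x‖) * (‖B‖ / ‖C‖ + τ)⁻¹ ∂ρ :=
          norm_integral_le_of_norm_le (hφint.const_mul _)
            ((ae_restrict_iff' measurableSet_Ioi).2 (Filter.Eventually.of_forall key))
      _ = (2 * (1 + M₀) * ‖B‖ * ‖x‖) * ∫ τ in Ioi (0:ℝ), (‖B‖ / ‖C‖ + τ)⁻¹ ∂ρ :=
          MeasureTheory.integral_const_mul _ _
  have hI0 : 0 ≤ ∫ τ in Ioi (0:ℝ), (‖B‖ / ‖C‖ + τ)⁻¹ ∂ρ := by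
    refine setIntegral_nonneg measurableSet_Ioi fun τ hτ => ?_
    have : (0:ℝ) < τ := hτ
    positivity
  have h1 : ‖c₀ • C x‖ ≤ c₀ * (‖C‖ * ‖x‖) := by
    rw [norm_smul, Real.norm_eq_abs, _root_.abs_of_nonneg hc₀]
    exact mul_le_mul_of_nonneg_left (C.le_opNorm x) hc₀
  have h2 : ‖c₁ • B x‖ ≤ c₁ * (‖B‖ * ‖x‖) := by
    rw [norm_smul, Real.norm_eq_abs, _root_.abs_of_nonneg hc₁]
    exact mul_le_mul_of_nonneg_left (B.le_opNorm x) hc₁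
  have e1 : ‖B‖ * (c₀ / (‖B‖ / ‖C‖)) = c₀ * ‖C‖ := by
    field_simp
  have hfac : (1:ℝ) ≤ 2 * (1 + M₀) := by linarith
  calc ‖c₀ • C x + c₁ • B x +
        ∫ τ in Ioi (0:ℝ), (∫ s in Ioi (0:ℝ), Real.exp (-τ * s) • T s (B x)) ∂ρ‖
      ≤ ‖c₀ • C x‖ + ‖c₁ • B x‖ +
        ‖∫ τ in Ioi (0:ℝ), (∫ s in Ioi (0:ℝ), Real.exp (-τ * s) • T s (B x)) ∂ρ‖ :=
        norm_add₃_le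
    _ ≤ c₀ * (‖C‖ * ‖x‖) + c₁ * (‖B‖ * ‖x‖) +
        (2 * (1 + M₀) * ‖B‖ * ‖x‖) * ∫ τ in Ioi (0:ℝ), (‖B‖ / ‖C‖ + τ)⁻¹ ∂ρ :=
        add_le_add (add_le_add h1 h2) hIbound
    _ ≤ 2 * (1 + M₀) * ‖B‖ *
        (c₀ / (‖B‖ / ‖C‖) + c₁ + ∫ τ in Ioi (0:ℝ), (‖B‖ / ‖C‖ + τ)⁻¹ ∂ρ) * ‖x‖ := by
        have expand : 2 * (1 + M₀) * ‖B‖ *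
            (c₀ / (‖B‖ / ‖C‖) + c₁ + ∫ τ in Ioi (0:ℝ), (‖B‖ / ‖C‖ + τ)⁻¹ ∂ρ) * ‖x‖
            = 2 * (1 + M₀) * (c₀ * (‖C‖ * ‖x‖)) + 2 * (1 + M₀) * (c₁ * (‖B‖ * ‖x‖)) +
              2 * (1 + M₀) * ‖B‖ * ‖x‖ * ∫ τ in Ioi (0:ℝ), (‖B‖ / ‖C‖ + τ)⁻¹ ∂ρ := by
          linear_combination (2 * (1 + M₀) * ‖x‖) * e1
        rw [expand]
        have t1 : c₀ * (‖C‖ * ‖x‖) ≤ 2 * (1 + M₀) * (c₀ * (‖C‖ * ‖x‖)) :=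
          le_mul_of_one_le_left (by positivity) hfac
        have t2 : c₁ * (‖B‖ * ‖x‖) ≤ 2 * (1 + M₀) * (c₁ * (‖B‖ * ‖x‖)) :=
          le_mul_of_one_le_left (by positivity) hfac
        linarith
end

section
/- Let φ ∈ Φ with φ(z) ≢ z, i.e. φ(z) = bz + ∫₀^∞ (1 − e^{−zs}) dμ(s) with b ≥ 0, μ a nonzero positive measure on (0,∞), b + ∫₀^∞ s dμ(s) = 1 and ∫₀^∞ s² dμ(s) < ∞. Then there exist c > 0 and T > 0 such that for all t ≥ T: |e^{−tφ(i/√t)} − e^{−i√t}| ≥ c and |e^{−tφ(−i/√t)} − e^{i√t}| ≥ c, where φ is extended to the closed right half-plane by the same Lévy–Khintchine formula. -/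
open MeasureTheory Set Complex

lemma aux_abs_one_sub_exp (θ : ℝ) :
    ‖1 - Complex.exp ((θ:ℂ) * I)‖ ≤ |θ| := by
  have h : (1 : ℂ) - Complex.exp ((θ:ℂ) * I)
      = ((1 - Real.cos θ : ℝ) : ℂ) + ((- Real.sin θ : ℝ)) * I := by
    rw [Complex.exp_mul_I]; push_cast; ring
  rw [h, Complex.norm_add_mul_I]
  have h2 : (1 - Real.cos θ) ^ 2 + (-Real.sin θ) ^ 2 ≤ θ ^ 2 := by
    have := Real.sin_sq_add_cos_sq θ
    have := Real.one_sub_sq_div_two_le_cos (x := θ)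
    nlinarith
  calc Real.sqrt ((1 - Real.cos θ) ^ 2 + (-Real.sin θ) ^ 2) ≤ Real.sqrt (θ^2) :=
        Real.sqrt_le_sqrt h2
    _ = |θ| := by rw [Real.sqrt_sq_eq_abs]

lemma aux_re_one_sub_exp (θ : ℝ) :
    ((1:ℂ) - Complex.exp ((θ:ℂ) * I)).re = 1 - Real.cos θ := by
  simp [Complex.exp_ofReal_mul_I_re]

lemma aux_int_complex (μ : Measure ℝ) (hμ1 : IntegrableOn (fun s : ℝ => s) (Ioi 0) μ) (c : ℝ) :
    Integrable (fun s : ℝ => (1:ℂ) - Complex.exp (((c * s : ℝ):ℂ) * I)) (μ.restrict (Ioi 0)) := by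
  refine Integrable.mono' (g := fun s => |c| * s) (hμ1.const_mul |c|) ?_ ?_
  · exact (Continuous.aestronglyMeasurable (by continuity))
  · rw [ae_restrict_iff' measurableSet_Ioi]
    refine ae_of_all _ fun s hs => ?_
    have := aux_abs_one_sub_exp (c * s)
    show ‖(1:ℂ) - Complex.exp (((c * s : ℝ):ℂ) * I)‖ ≤ |c| * s
    calc ‖1 - Complex.exp (((c * s : ℝ):ℂ) * I)‖ ≤ |c * s| := this
      _ = |c| * s := by rw [abs_mul, abs_of_pos (show (0:ℝ) < s from hs)]

lemma aux_int_real (μ : Measure ℝ) (hμ2 : IntegrableOn (fun s : ℝ => s ^ 2) (Ioi 0) μ) (c : ℝ) :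
    IntegrableOn (fun s : ℝ => 1 - Real.cos (c * s)) (Ioi 0) μ := by
  refine Integrable.mono' (g := fun s => c^2 / 2 * s^2) (hμ2.const_mul _) ?_ ?_
  · exact (Continuous.aestronglyMeasurable (by continuity))
  · refine ae_of_all _ fun s => ?_
    have h1 : 1 - (c*s)^2/2 ≤ Real.cos (c*s) := Real.one_sub_sq_div_two_le_cos
    have h2 : Real.cos (c*s) ≤ 1 := Real.cos_le_one _
    rw [Real.norm_eq_abs, _root_.abs_of_nonneg (by linarith)]
    nlinarith [sq_nonneg s, sq_nonneg c]

lemma aux_re_integral (μ : Measure ℝ) (hμ1 : IntegrableOn (fun s : ℝ => s) (Ioi 0) μ) (c : ℝ) :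
    (∫ s in Ioi (0:ℝ), ((1:ℂ) - Complex.exp (((c * s : ℝ):ℂ) * I)) ∂μ).re
      = ∫ s in Ioi (0:ℝ), (1 - Real.cos (c * s)) ∂μ := by
  rw [show ((∫ s in Ioi (0:ℝ), ((1:ℂ) - Complex.exp (((c * s : ℝ):ℂ) * I)) ∂μ).re : ℝ)
      = RCLike.re (∫ s in Ioi (0:ℝ), ((1:ℂ) - Complex.exp (((c * s : ℝ):ℂ) * I)) ∂μ) from rfl,
    ← integral_re (aux_int_complex μ hμ1 c)]
  exact setIntegral_congr_fun measurableSet_Ioi fun s _ => aux_re_one_sub_exp (c * s)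

set_option maxHeartbeats 1000000 in
/-- Lemma 7.1: for `φ ∈ Φ` with `φ(z) ≢ z` (Lévy data `(b, μ)`, `μ ≠ 0`), there exist
`c > 0` and `T > 0` such that `|e^(-tφ(±i/√t)) - e^(∓i√t)| ≥ c` for all `t ≥ T`, where
`φ(z) = bz + ∫ (1 - e^(-zs)) dμ(s)` on the closed right half-plane. -/
theorem statement17 (b : ℝ) (hb : 0 ≤ b) (μ : Measure ℝ)
    (hμ1 : IntegrableOn (fun s : ℝ => s) (Ioi 0) μ)
    (hμ2 : IntegrableOn (fun s : ℝ => s ^ 2) (Ioi 0) μ)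
    (hmom : b + ∫ s in Ioi (0:ℝ), s ∂μ = 1)
    (hμ0 : μ.restrict (Ioi 0) ≠ 0)
    (φ : ℂ → ℂ)
    (hφ : ∀ z : ℂ, 0 ≤ z.re →
      φ z = (b:ℂ) * z + ∫ s in Ioi (0:ℝ), (1 - Complex.exp (-z * s)) ∂μ) :
    ∃ c > (0:ℝ), ∃ T > (0:ℝ), ∀ t : ℝ, T ≤ t →
      c ≤ ‖(Complex.exp (-(t:ℂ) * φ (Complex.I / (Real.sqrt t : ℂ))) -
            Complex.exp (-(Complex.I * (Real.sqrt t : ℂ))))‖ ∧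
      c ≤ ‖(Complex.exp (-(t:ℂ) * φ (-Complex.I / (Real.sqrt t : ℂ))) -
            Complex.exp (Complex.I * (Real.sqrt t : ℂ)))‖ := by
  have hμIoi : μ (Ioi (0:ℝ)) ≠ 0 := fun h => hμ0 (Measure.restrict_eq_zero.2 h)
  obtain ⟨n, hn⟩ : ∃ n : ℕ, μ (Ioc (1/(n+1):ℝ) (n+1)) ≠ 0 := by
    by_contra h
    push_neg at h
    apply hμIoi
    refine measure_mono_null ?_ (measure_iUnion_null h)
    intro s hs
    have hs0 : (0:ℝ) < s := hs
    obtain ⟨k, hk⟩ := exists_nat_gt (max (1/s) s)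
    have h1 : 1/s < (k:ℝ) := lt_of_le_of_lt (le_max_left _ _) hk
    have h2 : s < (k:ℝ) := lt_of_le_of_lt (le_max_right _ _) hk
    have h1' : 1 < (k:ℝ) * s := (div_lt_iff₀ hs0).mp h1
    refine mem_iUnion.2 ⟨k, ?_, by linarith⟩
    rw [div_lt_iff₀ (by positivity)]
    nlinarith
  set a : ℝ := 1/(n+1) with ha
  set M : ℝ := (n:ℝ)+1 with hM
  have ha0 : 0 < a := by positivity
  have hM1 : 1 ≤ M := by rw [hM]; nlinarith [Nat.cast_nonneg (α := ℝ) n]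
  have haM : a ≤ M := by
    rw [ha, div_le_iff₀ (by positivity)]; nlinarith
  set S : Set ℝ := Ioc a M with hS
  have hnS : μ S ≠ 0 := by
    convert hn using 3 <;> push_cast <;> ring
  have hSsub : S ⊆ Ioi (0:ℝ) := fun s hs => ha0.trans hs.1
  have hSfin : μ S < ⊤ := by
    have hint : Integrable (fun s : ℝ => s) (μ.restrict (Ioi 0)) := hμ1
    have hfin := hint.measure_ge_lt_top ha0
    have hSle : μ S ≤ (μ.restrict (Ioi 0)) {x : ℝ | a ≤ x} := by
      rw [Measure.restrict_apply' measurableSet_Ioi]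
      exact measure_mono (fun x hx => ⟨hx.1.le, hSsub hx⟩)
    exact lt_of_le_of_lt hSle hfin
  set m := (μ S).toReal with hm
  have hm0 : 0 < m := ENNReal.toReal_pos hnS hSfin.ne
  set δ : ℝ := 2/Real.pi^2 * a^2 * m with hδdef
  have hπ : (0:ℝ) < Real.pi := Real.pi_pos
  have hδ : 0 < δ := by positivity
  refine ⟨1 - Real.exp (-δ), by nlinarith [Real.exp_lt_one_iff.2 (neg_neg_iff_pos.2 hδ)],
    max 1 (M^2), lt_of_lt_of_le zero_lt_one (le_max_left _ _), fun t ht => ?_⟩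
  have ht1 : (1:ℝ) ≤ t := le_trans (le_max_left _ _) ht
  have ht0 : 0 < t := by linarith
  set r := Real.sqrt t with hrdef
  have hr0 : 0 < r := Real.sqrt_pos.2 ht0
  have hr2 : r^2 = t := Real.sq_sqrt ht0.le
  have hMr : M ≤ r := by
    have h' : M^2 ≤ t := le_trans (le_max_right _ _) ht
    calc M = Real.sqrt (M^2) := (Real.sqrt_sq (by positivity)).symm
      _ ≤ r := Real.sqrt_le_sqrt h'
  -- key integral lower bound
  have hJ : ∀ c : ℝ, |c| = 1/r →
      δ / t ≤ ∫ s in Ioi (0:ℝ), (1 - Real.cos (c*s)) ∂μ := by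
    intro c hc
    have hKnn : (0:ℝ) ≤ 2/Real.pi^2 * (a^2/t) := by positivity
    have step1 : δ / t = ∫ s in S, (2/Real.pi^2 * (a^2/t)) ∂μ := by
      rw [setIntegral_const, smul_eq_mul, hδdef, hm, measureReal_def]
      ring
    have step2 : (∫ s in S, (2/Real.pi^2 * (a^2/t)) ∂μ)
        ≤ ∫ s in S, (1 - Real.cos (c*s)) ∂μ := by
      refine setIntegral_mono_on (integrableOn_const hSfin.ne)
        ((aux_int_real μ hμ2 c).mono_set hSsub) measurableSet_Ioc ?_
      intro s hs
      have hs0 : 0 < s := ha0.trans hs.1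
      have hxabs : |c*s| = s/r := by
        rw [abs_mul, hc, _root_.abs_of_pos hs0]; ring
      have hxle1 : |c*s| ≤ 1 := by
        rw [hxabs, div_le_one hr0]; exact le_trans hs.2 hMr
      have hxpi : |c*s| ≤ Real.pi := le_trans hxle1 (by nlinarith [Real.pi_gt_three])
      have hcos := Real.cos_le_one_sub_mul_cos_sq hxpi
      have hsq : (c*s)^2 = s^2/t := by
        rw [← _root_.sq_abs, hxabs, div_pow, hr2]
      have hs2 : a^2/t ≤ s^2/t := (div_le_div_iff_of_pos_right ht0).2 (by nlinarith [hs.1])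
      have h6 : 2/Real.pi^2 * (a^2/t) ≤ 2/Real.pi^2 * (s^2/t) :=
        mul_le_mul_of_nonneg_left hs2 (by positivity)
      rw [hsq] at hcos
      linarith
    have step3 : (∫ s in S, (1 - Real.cos (c*s)) ∂μ)
        ≤ ∫ s in Ioi (0:ℝ), (1 - Real.cos (c*s)) ∂μ := by
      refine setIntegral_mono_set (aux_int_real μ hμ2 c) ?_ (HasSubset.Subset.eventuallyLE hSsub)
      refine ae_of_all _ fun s => ?_
      have := Real.cos_le_one (c*s); simp; linarith
    linarith [step1.le, step2, step3]
  -- key bound on |exp(-tφ(c i))|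
  have key : ∀ c : ℝ, |c| = 1/r →
      ‖Complex.exp (-(t:ℂ) * φ ((c:ℂ) * I))‖ ≤ Real.exp (-δ) := by
    intro c hc
    have hzre : ((c:ℂ) * I).re = 0 := by simp
    have hIeq : (∫ s in Ioi (0:ℝ), ((1:ℂ) - Complex.exp (-((c:ℂ) * I) * s)) ∂μ)
        = ∫ s in Ioi (0:ℝ), ((1:ℂ) - Complex.exp ((((-c) * s : ℝ):ℂ) * I)) ∂μ := by
      refine setIntegral_congr_fun measurableSet_Ioi fun s _ => ?_
      rw [show -((c:ℂ)*I)*(s:ℂ) = (((-c)*s:ℝ):ℂ)*I by push_cast; ring]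
    have hre' : (φ ((c:ℂ)*I)).re = ∫ s in Ioi (0:ℝ), (1 - Real.cos ((-c) * s)) ∂μ := by
      rw [hφ _ (le_of_eq hzre.symm), hIeq, Complex.add_re,
        aux_re_integral μ hμ1 (-c)]
      simp [Complex.mul_re]
    have hJc : δ / t ≤ (φ ((c:ℂ)*I)).re := by
      rw [hre']; exact hJ (-c) (by rwa [abs_neg])
    rw [Complex.norm_exp]
    apply Real.exp_le_exp.2
    have hre2 : (-(t:ℂ) * φ ((c:ℂ)*I)).re = -(t * (φ ((c:ℂ)*I)).re) := by
      simp [Complex.mul_re]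
    rw [hre2]
    apply neg_le_neg
    rw [mul_comm]
    exact (div_le_iff₀ ht0).mp hJc
  have hz1 : Complex.I / ((r:ℝ):ℂ) = (((1/r : ℝ)):ℂ) * I := by push_cast; ring
  have hz2 : -Complex.I / ((r:ℝ):ℂ) = (((-1/r : ℝ)):ℂ) * I := by push_cast; ring
  have hB1 : ‖Complex.exp (-(Complex.I * (r:ℂ)))‖ = 1 := by
    rw [Complex.norm_exp]; simp [Complex.mul_re]
  have hB2 : ‖Complex.exp (Complex.I * (r:ℂ))‖ = 1 := by
    rw [Complex.norm_exp]; simp [Complex.mul_re]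
  constructor
  · rw [hz1]
    have h1 := key (1/r) (_root_.abs_of_pos (by positivity))
    have h3 := abs_norm_sub_norm_le
      (Complex.exp (-(t:ℂ) * φ ((((1/r:ℝ)):ℂ) * I))) (Complex.exp (-(Complex.I * (r:ℂ))))
    have h4 := le_abs_self (‖Complex.exp (-(t:ℂ) * φ ((((1/r:ℝ)):ℂ) * I))‖
      - ‖Complex.exp (-(Complex.I * (r:ℂ)))‖)
    have h5 := neg_abs_le (‖Complex.exp (-(t:ℂ) * φ ((((1/r:ℝ)):ℂ) * I))‖
      - ‖Complex.exp (-(Complex.I * (r:ℂ)))‖)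
    linarith [h3, h5, h1, hB1]
  · rw [hz2]
    have h1 := key (-1/r) (by rw [abs_div, abs_neg, abs_one, _root_.abs_of_pos hr0])
    have h3 := abs_norm_sub_norm_le
      (Complex.exp (-(t:ℂ) * φ ((((-1/r:ℝ)):ℂ) * I))) (Complex.exp (Complex.I * (r:ℂ)))
    have h5 := neg_abs_le (‖Complex.exp (-(t:ℂ) * φ ((((-1/r:ℝ)):ℂ) * I))‖
      - ‖Complex.exp (Complex.I * (r:ℂ))‖)
    linarith [h3, h5, h1, hB2]
end

section
/- Let φ ∈ Φ with φ(z) ≢ z, i.e. φ(z) = bz + ∫₀^∞ (1 − e^{−zs}) dμ(s) with b ≥ 0, μ a nonzero positive measure on (0,∞), b + ∫₀^∞ s dμ(s) = 1 and ∫₀^∞ s² dμ(s) < ∞. Then there exist δ > 0 and c > 0 such that for all τ ∈ (0, δ]: e^{−φ(τ)/τ} − e^{−1} ≥ c τ. -/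
open MeasureTheory Set

lemma aux_g_quad (x : ℝ) (h0 : 0 ≤ x) (h1 : x ≤ 1) :
    x ^ 2 / 4 ≤ x - 1 + Real.exp (-x) := by
  have hb := Real.exp_bound (x := -x) (by rwa [abs_neg, abs_of_nonneg h0]) (n := 3) (by norm_num)
  rw [abs_neg, abs_of_nonneg h0] at hb
  norm_num [Finset.sum_range_succ, Nat.factorial] at hb
  have h := abs_le.mp hb
  nlinarith [h.1, h.2, pow_nonneg h0 3, sq_nonneg x]

lemma aux_g_mono (u v : ℝ) (hu : 0 ≤ u) (huv : u ≤ v) :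
    u - 1 + Real.exp (-u) ≤ v - 1 + Real.exp (-v) := by
  have h1 : Real.exp (-v) = Real.exp (-u) * Real.exp (u - v) := by
    rw [← Real.exp_add]; ring_nf
  have h2 := Real.add_one_le_exp (u - v)
  have h3 : Real.exp (-u) ≤ 1 := Real.exp_le_one_iff.mpr (by linarith)
  have h4 : Real.exp (u - v) ≤ 1 := Real.exp_le_one_iff.mpr (by linarith)
  have h5 := Real.exp_pos (-u)
  nlinarith


/-- Lemma 7.2: for `φ ∈ Φ` with `φ(z) ≢ z` (Lévy data `(b, μ)`, `μ ≠ 0`), there exist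
`δ > 0` and `c > 0` such that `e^(-φ(τ)/τ) - e^(-1) ≥ cτ` for all `τ ∈ (0, δ]`, where
`φ(τ) = bτ + ∫ (1 - e^(-τs)) dμ(s)`. -/
theorem statement18 (b : ℝ) (hb : 0 ≤ b) (μ : Measure ℝ)
    (hμ1 : IntegrableOn (fun s : ℝ => s) (Ioi 0) μ)
    (hμ2 : IntegrableOn (fun s : ℝ => s ^ 2) (Ioi 0) μ)
    (hmom : b + ∫ s in Ioi (0:ℝ), s ∂μ = 1)
    (hμ0 : μ.restrict (Ioi 0) ≠ 0)
    (φ : ℝ → ℝ)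
    (hφ : ∀ τ : ℝ, 0 ≤ τ →
      φ τ = b * τ + ∫ s in Ioi (0:ℝ), (1 - Real.exp (-τ * s)) ∂μ) :
    ∃ δ > (0:ℝ), ∃ c > (0:ℝ), ∀ τ : ℝ, τ ∈ Ioc (0:ℝ) δ →
      c * τ ≤ Real.exp (-(φ τ) / τ) - Real.exp (-1) := by
  have hμIoi : μ (Ioi 0) ≠ 0 := by rwa [Ne, Measure.restrict_eq_zero] at hμ0
  -- find a > 0 with μ (Ici a) ≠ 0
  obtain ⟨a, ha, hma⟩ : ∃ a : ℝ, 0 < a ∧ μ (Ici a) ≠ 0 := by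
    by_contra h
    push_neg at h
    apply hμIoi
    have hsub : Ioi (0:ℝ) ⊆ ⋃ n : ℕ, Ici (1/(n+1) : ℝ) := by
      intro x hx
      simp only [mem_Ioi] at hx
      obtain ⟨n, hn⟩ := exists_nat_gt (1/x)
      refine mem_iUnion.mpr ⟨n, ?_⟩
      simp only [mem_Ici]
      rw [div_le_iff₀ (by positivity)]
      have h1 : 1 < x * n := by
        have := (div_lt_iff₀ hx).mp hn
        linarith
      nlinarith
    exact measure_mono_null hsub (measure_iUnion_null fun n => h _ (by positivity))
  have hsubIci : Ici a ⊆ Ioi (0:ℝ) := fun x hx => lt_of_lt_of_le ha hx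
  have hIciEq : Ici a ∩ Ioi (0:ℝ) = Ici a := inter_eq_left.mpr hsubIci
  have h3 : μ.restrict (Ioi 0) (Ici a) = μ (Ici a) := by
    rw [Measure.restrict_apply measurableSet_Ici, hIciEq]
  have hfin : μ (Ici a) < ⊤ := by
    have h2 : μ.restrict (Ioi 0) {s : ℝ | a ≤ s} < ⊤ := hμ1.measure_ge_lt_top ha
    rw [show {s : ℝ | a ≤ s} = Ici a from rfl, h3] at h2
    exact h2
  set m : ℝ := (μ (Ici a)).toReal with hm_def
  have hm : 0 < m := ENNReal.toReal_pos hma hfin.ne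
  set K : ℝ := m * a ^ 2 / 4 with hK_def
  have hK : 0 < K := by positivity
  refine ⟨1/a, by positivity, Real.exp (-1) * K, by positivity, ?_⟩
  rintro τ ⟨hτ0, hτδ⟩
  have hτa : τ * a ≤ 1 := by
    rw [← le_div_iff₀ ha]; exact hτδ
  have hτa0 : 0 ≤ τ * a := by positivity
  -- integrability of 1 - exp(-τ s)
  have hmeas : AEStronglyMeasurable (fun s : ℝ => 1 - Real.exp (-τ * s))
      (μ.restrict (Ioi 0)) := by
    apply Continuous.aestronglyMeasurable
    fun_prop
  have hI1 : IntegrableOn (fun s : ℝ => 1 - Real.exp (-τ * s)) (Ioi 0) μ := by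
    refine Integrable.mono (hμ1.const_mul τ) hmeas ?_
    filter_upwards [ae_restrict_mem measurableSet_Ioi] with s hs
    simp only [mem_Ioi] at hs
    have hts : 0 ≤ τ * s := by positivity
    have h1 : Real.exp (-τ * s) ≤ 1 := Real.exp_le_one_iff.mpr (by linarith)
    have h2 : 1 - Real.exp (-τ * s) ≤ τ * s := by
      nlinarith [Real.add_one_le_exp (-τ * s)]
    rw [Real.norm_eq_abs, Real.norm_eq_abs, abs_of_nonneg (by linarith),
      abs_of_nonneg hts]
    exact h2
  set g : ℝ → ℝ := fun s => τ * s - (1 - Real.exp (-τ * s)) with hg_def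
  have hIg : IntegrableOn g (Ioi 0) μ := (hμ1.const_mul τ).sub hI1
  have hsplit : ∫ s in Ioi (0:ℝ), (1 - Real.exp (-τ * s)) ∂μ
      = τ * (∫ s in Ioi (0:ℝ), s ∂μ) - ∫ s in Ioi (0:ℝ), g s ∂μ := by
    have h4 : ∫ s in Ioi (0:ℝ), g s ∂μ
        = (∫ s in Ioi (0:ℝ), τ * s ∂μ) - ∫ s in Ioi (0:ℝ), (1 - Real.exp (-τ * s)) ∂μ :=
      integral_sub (hμ1.const_mul τ) hI1
    have h5 : ∫ s in Ioi (0:ℝ), τ * s ∂μ = τ * ∫ s in Ioi (0:ℝ), s ∂μ :=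
      integral_const_mul τ _
    rw [h5] at h4
    linarith
  -- g is nonneg on Ioi 0
  have hg_nonneg : ∀ s : ℝ, 0 ≤ s → 0 ≤ g s := by
    intro s hs
    have := Real.add_one_le_exp (-τ * s)
    simp only [hg_def]
    nlinarith
  -- lower bound on ∫ g
  have key : m * ((τ * a) ^ 2 / 4) ≤ ∫ s in Ioi (0:ℝ), g s ∂μ := by
    have h1 : ∫ s in Ici a, g s ∂μ ≤ ∫ s in Ioi (0:ℝ), g s ∂μ := by
      apply setIntegral_mono_set hIg
      · filter_upwards [ae_restrict_mem measurableSet_Ioi] with s hs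
        exact hg_nonneg s (le_of_lt hs)
      · exact HasSubset.Subset.eventuallyLE hsubIci
    have h2 : ∫ _ in Ici a, ((τ * a) ^ 2 / 4) ∂μ ≤ ∫ s in Ici a, g s ∂μ := by
      apply setIntegral_mono_on (integrableOn_const hfin.ne)
        (hIg.mono_set hsubIci) measurableSet_Ici
      intro s hs
      simp only [mem_Ici] at hs
      have hq := aux_g_quad (τ * a) hτa0 hτa
      have hmono := aux_g_mono (τ * a) (τ * s)
        hτa0 (by nlinarith)
      simp only [hg_def, neg_mul]
      linarith
    rw [setIntegral_const, smul_eq_mul, measureReal_def, ← hm_def] at h2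
    linarith
  -- bound on φ
  have hφτ : φ τ ≤ τ - K * τ ^ 2 := by
    rw [hφ τ hτ0.le, hsplit]
    have hKτ : K * τ ^ 2 = m * ((τ * a) ^ 2 / 4) := by
      simp only [hK_def]; ring
    nlinarith
  -- exponential bounds
  have h5 : -1 + K * τ ≤ -(φ τ) / τ := by
    rw [le_div_iff₀ hτ0]
    nlinarith
  have h6 : Real.exp (-1 + K * τ) ≤ Real.exp (-(φ τ) / τ) := Real.exp_le_exp.mpr h5
  have h7 : Real.exp (-1) * (1 + K * τ) ≤ Real.exp (-1 + K * τ) := by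
    rw [Real.exp_add]
    have := Real.add_one_le_exp (K * τ)
    nlinarith [Real.exp_pos (-1 : ℝ)]
  nlinarith [Real.exp_pos (-1 : ℝ)]
end

section
/- For every integer m ≥ 1: ∫₀^∞ e^{−s} |L_{m−1}^{(1)}(s)| ds ≤ 2√m, where L_{m−1}^{(1)}(s) = Σ_{k=0}^{m−1} (−1)^k (m choose (k+1)) s^k / k! is the generalized Laguerre polynomial of degree m−1 with parameter 1. -/
open MeasureTheory Set Finset


lemma lemS (m b : ℕ) :
    ∑ k ∈ range (m + 1), (-1 : ℤ) ^ k * (m.choose k : ℤ) * (k.choose b : ℤ)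
      = if b = m then (-1) ^ m else 0 := by
  by_cases hbm : b ≤ m
  · have h1 : ∀ k ∈ Finset.Ico 0 b, (-1 : ℤ) ^ k * (m.choose k : ℤ) * (k.choose b : ℤ) = 0 := by
      intro k hk
      simp only [Finset.mem_Ico] at hk
      rw [Nat.choose_eq_zero_of_lt hk.2]
      simp
    have hsplit : ∑ k ∈ range (m + 1), (-1 : ℤ) ^ k * (m.choose k : ℤ) * (k.choose b : ℤ)
        = ∑ k ∈ Finset.Ico b (m + 1), (-1 : ℤ) ^ k * (m.choose k : ℤ) * (k.choose b : ℤ) := by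
      rw [Finset.range_eq_Ico, ← Finset.sum_Ico_consecutive _ (Nat.zero_le b) (by omega),
        Finset.sum_eq_zero h1, zero_add]
    rw [hsplit, Finset.sum_Ico_eq_sum_range]
    have hkey : ∀ i ∈ range (m + 1 - b),
        (-1 : ℤ) ^ (b + i) * (m.choose (b + i) : ℤ) * ((b + i).choose b : ℤ)
          = ((-1) ^ b * (m.choose b : ℤ)) * ((-1) ^ i * ((m - b).choose i : ℤ)) := by
      intro i hi
      simp only [Finset.mem_range] at hi
      have h2 : m.choose (b + i) * (b + i).choose b = m.choose b * (m - b).choose (b + i - b) :=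
        Nat.choose_mul (by omega)
      simp only [Nat.add_sub_cancel_left] at h2
      have h2' : ((m.choose (b + i) : ℤ)) * (((b + i).choose b : ℤ))
          = (m.choose b : ℤ) * ((m - b).choose i : ℤ) := by exact_mod_cast h2
      rw [pow_add]
      linear_combination ((-1 : ℤ) ^ b * (-1) ^ i) * h2'
    rw [Finset.sum_congr rfl hkey, ← Finset.mul_sum]
    have hrange : m + 1 - b = (m - b) + 1 := by omega
    rw [hrange, Int.alternating_sum_range_choose]
    rcases eq_or_ne b m with rfl | hne
    · simp
    · rw [if_neg (by omega), if_neg hne, mul_zero]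
  · have : ∀ k ∈ range (m + 1), (-1 : ℤ) ^ k * (m.choose k : ℤ) * (k.choose b : ℤ) = 0 := by
      intro k hk
      simp only [Finset.mem_range] at hk
      rw [Nat.choose_eq_zero_of_lt (show k < b by omega)]
      simp
    rw [Finset.sum_eq_zero this, if_neg (by omega)]

lemma lemG (m j : ℕ) (hm : 1 ≤ m) (hj : j < m) :
    ∑ k ∈ range m, (-1 : ℤ) ^ k * (m.choose (k + 1) : ℤ) * ((j + k).choose j : ℤ)
      = if j = 0 then 1 else 0 := by
  rcases Nat.eq_zero_or_pos j with rfl | hj1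
  · -- j = 0 : sum of (-1)^k C(m,k+1) = 1
    have h0 := Int.alternating_sum_range_choose_of_ne (n := m) (by omega)
    rw [Finset.sum_range_succ' _ m] at h0
    simp only [Nat.choose_zero_right, pow_zero, Nat.cast_one, mul_one] at h0
    have : ∑ k ∈ range m, (-1 : ℤ) ^ (k + 1) * (m.choose (k + 1) : ℤ) = -1 := by linarith
    rw [if_pos rfl]
    have heq : ∀ k ∈ range m, (-1 : ℤ) ^ k * (m.choose (k + 1) : ℤ) * (((0 : ℕ) + k).choose 0 : ℤ)
        = -((-1 : ℤ) ^ (k + 1) * (m.choose (k + 1) : ℤ)) := by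
      intro k _
      simp [pow_succ]
    rw [Finset.sum_congr rfl heq, Finset.sum_neg_distrib, this]
    norm_num
  · rw [if_neg (by omega)]
    -- relate to A' = ∑_{k ∈ range (m+1)} (-1)^k C(m,k) C((j-1)+k, j)
    have hA : ∑ k ∈ range (m + 1), (-1 : ℤ) ^ k * (m.choose k : ℤ) * (((j - 1) + k).choose j : ℤ)
        = -∑ k ∈ range m, (-1 : ℤ) ^ k * (m.choose (k + 1) : ℤ) * ((j + k).choose j : ℤ) := by
      rw [Finset.sum_range_succ' _ m]
      have hz : ((j - 1 + 0).choose j : ℤ) = 0 := by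
        rw [Nat.choose_eq_zero_of_lt (by omega)]; simp
      rw [hz]
      simp only [Nat.choose_zero_right, Nat.cast_one, pow_zero, one_mul, mul_zero, add_zero]
      rw [← Finset.sum_neg_distrib]
      refine Finset.sum_congr rfl fun k _ => ?_
      have : j - 1 + (k + 1) = j + k := by omega
      rw [this, pow_succ]
      ring
    -- A' = 0 by Vandermonde + lemS
    have hA0 : ∑ k ∈ range (m + 1), (-1 : ℤ) ^ k * (m.choose k : ℤ) * (((j - 1) + k).choose j : ℤ)
        = 0 := by
      have hV : ∀ k, (((j - 1) + k).choose j : ℤ)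
          = ∑ ab ∈ Finset.HasAntidiagonal.antidiagonal j, ((j - 1).choose ab.1 : ℤ) * (k.choose ab.2 : ℤ) := by
        intro k
        rw [Nat.add_choose_eq]
        push_cast
        rfl
      calc ∑ k ∈ range (m + 1), (-1 : ℤ) ^ k * (m.choose k : ℤ) * (((j - 1) + k).choose j : ℤ)
          = ∑ k ∈ range (m + 1), ∑ ab ∈ Finset.HasAntidiagonal.antidiagonal j,
              ((j - 1).choose ab.1 : ℤ) * ((-1) ^ k * (m.choose k : ℤ) * (k.choose ab.2 : ℤ)) := by
            refine Finset.sum_congr rfl fun k _ => ?_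
            rw [hV k, Finset.mul_sum]
            refine Finset.sum_congr rfl fun ab _ => by ring
        _ = ∑ ab ∈ Finset.HasAntidiagonal.antidiagonal j, ((j - 1).choose ab.1 : ℤ) *
              ∑ k ∈ range (m + 1), (-1) ^ k * (m.choose k : ℤ) * (k.choose ab.2 : ℤ) := by
            rw [Finset.sum_comm]
            refine Finset.sum_congr rfl fun ab _ => by rw [Finset.mul_sum]
        _ = 0 := by
            refine Finset.sum_eq_zero fun ab hab => ?_
            rw [lemS m ab.2, if_neg, mul_zero]
            have := Finset.HasAntidiagonal.antidiagonal.fst_le hab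
            have h2 := (Finset.HasAntidiagonal.mem_antidiagonal.mp hab)
            omega
    omega

lemma lemT (m : ℕ) (hm : 1 ≤ m) :
    ∑ j ∈ range m, ∑ k ∈ range m, (-1 : ℤ) ^ j * (-1) ^ k * (m.choose (j + 1) : ℤ)
      * (m.choose (k + 1) : ℤ) * ((j + k).choose j : ℤ) = (m : ℤ) := by
  have hinner : ∀ j ∈ range m, ∑ k ∈ range m, (-1 : ℤ) ^ j * (-1) ^ k * (m.choose (j + 1) : ℤ)
      * (m.choose (k + 1) : ℤ) * ((j + k).choose j : ℤ)
      = (-1) ^ j * (m.choose (j + 1) : ℤ) * (if j = 0 then 1 else 0) := by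
    intro j hj
    rw [← lemG m j hm (Finset.mem_range.mp hj), Finset.mul_sum]
    refine Finset.sum_congr rfl fun k _ => by ring
  rw [Finset.sum_congr rfl hinner, Finset.sum_eq_single 0]
  · simp
  · intro b _ hb; rw [if_neg hb, mul_zero]
  · intro h; exact absurd (Finset.mem_range.mpr (by omega)) h


lemma integrableOn_exp_pow (n : ℕ) :
    IntegrableOn (fun s : ℝ => Real.exp (-s) * s ^ n) (Ioi 0) := by
  have h := Real.GammaIntegral_convergent (s := (n : ℝ) + 1) (by positivity)
  refine h.congr_fun ?_ measurableSet_Ioi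
  intro x hx
  simp only [add_sub_cancel_right, Real.rpow_natCast]

lemma int_exp_pow (n : ℕ) :
    ∫ s in Ioi (0:ℝ), Real.exp (-s) * s ^ n = (n.factorial : ℝ) := by
  have h2 : ∫ s in Ioi (0:ℝ), Real.exp (-s) * s ^ n
      = ∫ x in Ioi (0:ℝ), Real.exp (-x) * x ^ (((n : ℝ) + 1) - 1) := by
    refine setIntegral_congr_fun measurableSet_Ioi fun x hx => ?_
    rw [add_sub_cancel_right, Real.rpow_natCast]
  rw [h2, ← Real.Gamma_eq_integral (by positivity : (0:ℝ) < (n : ℝ) + 1),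
    Real.Gamma_nat_eq_factorial]

section Main
variable (m : ℕ)

noncomputable def aa (k : ℕ) : ℝ := (-1 : ℝ) ^ k * (m.choose (k + 1) : ℝ) / (Nat.factorial k : ℝ)

noncomputable def PP (s : ℝ) : ℝ := ∑ k ∈ Finset.range m, aa m k * s ^ k

lemma PP_eq (s : ℝ) :
    (∑ k ∈ Finset.range m, (-1 : ℝ) ^ k * (m.choose (k + 1) : ℝ) * s ^ k /
      (Nat.factorial k : ℝ)) = PP m s := by
  unfold PP aa
  refine Finset.sum_congr rfl fun k _ => by ring

lemma sq_expand (s : ℝ) :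
    Real.exp (-s) * (PP m s) ^ 2
      = ∑ p ∈ Finset.range m ×ˢ Finset.range m,
          (aa m p.1 * aa m p.2) * (Real.exp (-s) * s ^ (p.1 + p.2)) := by
  unfold PP
  rw [sq, Finset.sum_mul_sum, Finset.mul_sum]
  rw [Finset.sum_product]
  refine Finset.sum_congr rfl fun j _ => ?_
  rw [Finset.mul_sum]
  refine Finset.sum_congr rfl fun k _ => ?_
  rw [pow_add]
  ring

lemma integrableOn_sq :
    IntegrableOn (fun s : ℝ => Real.exp (-s) * (PP m s) ^ 2) (Ioi 0) := by
  have : IntegrableOn (fun s : ℝ => ∑ p ∈ Finset.range m ×ˢ Finset.range m,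
      (aa m p.1 * aa m p.2) * (Real.exp (-s) * s ^ (p.1 + p.2))) (Ioi 0) :=
    integrable_finset_sum _ fun p _ => (integrableOn_exp_pow (p.1 + p.2)).const_mul _
  exact this.congr_fun (fun s _ => (sq_expand m s).symm) measurableSet_Ioi

lemma int_sq (hm : 1 ≤ m) :
    ∫ s in Ioi (0:ℝ), Real.exp (-s) * (PP m s) ^ 2 = (m : ℝ) := by
  have h1 : ∫ s in Ioi (0:ℝ), Real.exp (-s) * (PP m s) ^ 2
      = ∑ p ∈ Finset.range m ×ˢ Finset.range m,
          (aa m p.1 * aa m p.2) * ((p.1 + p.2).factorial : ℝ) := by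
    rw [setIntegral_congr_fun measurableSet_Ioi (fun s _ => sq_expand m s),
      integral_finset_sum _ fun p _ => (integrableOn_exp_pow (p.1 + p.2)).const_mul _]
    refine Finset.sum_congr rfl fun p _ => ?_
    rw [integral_const_mul, int_exp_pow]
  rw [h1]
  have h2 : ∀ p ∈ Finset.range m ×ˢ Finset.range m,
      (aa m p.1 * aa m p.2) * ((p.1 + p.2).factorial : ℝ)
        = ((((-1 : ℤ) ^ p.1 * (-1) ^ p.2 * (m.choose (p.1 + 1) : ℤ) * (m.choose (p.2 + 1) : ℤ)
            * ((p.1 + p.2).choose p.1 : ℤ)) : ℤ) : ℝ) := by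
    intro p _
    have hfac : ((p.1 + p.2).choose p.1 * (p.1).factorial * (p.2).factorial : ℝ)
        = ((p.1 + p.2).factorial : ℝ) := by
      have := Nat.choose_mul_factorial_mul_factorial (Nat.le_add_right p.1 p.2)
      rw [Nat.add_sub_cancel_left] at this
      exact_mod_cast this
    unfold aa
    push_cast
    rw [← hfac]
    have h1 : ((p.1).factorial : ℝ) ≠ 0 := Nat.cast_ne_zero.mpr (Nat.factorial_ne_zero _)
    have h2 : ((p.2).factorial : ℝ) ≠ 0 := Nat.cast_ne_zero.mpr (Nat.factorial_ne_zero _)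
    field_simp
  rw [Finset.sum_congr rfl h2, ← Int.cast_sum]
  rw [show ∑ p ∈ Finset.range m ×ˢ Finset.range m, ((-1 : ℤ) ^ p.1 * (-1) ^ p.2
      * (m.choose (p.1 + 1) : ℤ) * (m.choose (p.2 + 1) : ℤ) * ((p.1 + p.2).choose p.1 : ℤ))
      = ∑ j ∈ Finset.range m, ∑ k ∈ Finset.range m, (-1 : ℤ) ^ j * (-1) ^ k
        * (m.choose (j + 1) : ℤ) * (m.choose (k + 1) : ℤ) * ((j + k).choose j : ℤ)
    from Finset.sum_product _ _ _]
  rw [lemT m hm]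
  simp

end Main

/-- Theorem 8.1: for every `m ≥ 1`,
`∫₀^∞ e^(-s) |L_{m-1}^{(1)}(s)| ds ≤ 2√m`, where
`L_{m-1}^{(1)}(s) = Σ_{k=0}^{m-1} (-1)^k binom(m, k+1) s^k / k!` is the generalized
Laguerre polynomial of degree `m-1` with parameter `1`. -/
theorem statement19 (m : ℕ) (hm : 1 ≤ m) :
    (∫ s in Ioi (0:ℝ), Real.exp (-s) *
        |∑ k ∈ Finset.range m, (-1 : ℝ) ^ k * (m.choose (k + 1) : ℝ) * s ^ k /
          (Nat.factorial k : ℝ)|) ≤ 2 * Real.sqrt m := by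
  set μ := volume.restrict (Ioi (0:ℝ)) with hμ
  set f : ℝ → ℝ := fun s => Real.exp (-(s/2)) with hf
  set g : ℝ → ℝ := fun s => Real.exp (-(s/2)) * |PP m s| with hg
  have hcontP : Continuous (PP m) := by
    unfold PP; fun_prop
  have hfmeas : AEStronglyMeasurable f μ := (by fun_prop : Continuous f).aestronglyMeasurable
  have hgmeas : AEStronglyMeasurable g μ := by
    have : Continuous g := by
      exact (Real.continuous_exp.comp (by fun_prop)).mul hcontP.abs
    exact this.aestronglyMeasurable
  have hfsq : ∀ s : ℝ, f s ^ 2 = Real.exp (-s) := by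
    intro s
    rw [hf, sq, ← Real.exp_add]
    ring_nf
  have hgsq : ∀ s : ℝ, g s ^ 2 = Real.exp (-s) * (PP m s) ^ 2 := by
    intro s
    simp only [hg, mul_pow, sq_abs]
    rw [show Real.exp (-(s/2)) ^ 2 = Real.exp (-s) from hfsq s]
  have hf2 : MemLp f 2 μ := by
    refine (memLp_two_iff_integrable_sq hfmeas).mpr ?_
    have h1 : IntegrableOn (fun x : ℝ => Real.exp (-1 * x)) (Ioi 0) :=
      exp_neg_integrableOn_Ioi 0 one_pos
    exact h1.congr_fun (fun x _ => by rw [hfsq x]; norm_num) measurableSet_Ioi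
  have hg2 : MemLp g 2 μ :=
    (memLp_two_iff_integrable_sq hgmeas).mpr
      ((integrableOn_sq m).congr_fun (fun s _ => (hgsq s).symm) measurableSet_Ioi)
  have hpq : (2:ℝ).HolderConjugate 2 := ⟨by norm_num, by norm_num, by norm_num⟩
  have hf2' : MemLp f (ENNReal.ofReal (2:ℝ)) μ := by rwa [ENNReal.ofReal_ofNat]
  have hg2' : MemLp g (ENNReal.ofReal (2:ℝ)) μ := by rwa [ENNReal.ofReal_ofNat]
  have hfnn : 0 ≤ᵐ[μ] f := Filter.Eventually.of_forall fun s => (Real.exp_pos _).le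
  have hgnn : 0 ≤ᵐ[μ] g :=
    Filter.Eventually.of_forall fun s => mul_nonneg (Real.exp_pos _).le (abs_nonneg _)
  have hCS := integral_mul_le_Lp_mul_Lq_of_nonneg hpq hfnn hgnn hf2' hg2'
  have hrpow : ∀ x : ℝ, x ^ (2:ℝ) = x ^ (2:ℕ) := fun x => by
    rw [show (2:ℝ) = ((2:ℕ):ℝ) by norm_num, Real.rpow_natCast]
  have hIf : ∫ a, f a ^ (2:ℝ) ∂μ = 1 := by
    simp_rw [hrpow]
    rw [show ∫ a, f a ^ (2:ℕ) ∂μ = ∫ a in Ioi (0:ℝ), Real.exp (-a) from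
      setIntegral_congr_fun measurableSet_Ioi fun a _ => hfsq a, integral_exp_neg_Ioi_zero]
  have hIg : ∫ a, g a ^ (2:ℝ) ∂μ = (m:ℝ) := by
    simp_rw [hrpow]
    rw [show ∫ a, g a ^ (2:ℕ) ∂μ = ∫ a in Ioi (0:ℝ), Real.exp (-a) * (PP m a) ^ 2 from
      setIntegral_congr_fun measurableSet_Ioi fun a _ => hgsq a, int_sq m hm]
  have hLHS : (∫ s in Ioi (0:ℝ), Real.exp (-s) *
        |∑ k ∈ Finset.range m, (-1 : ℝ) ^ k * (m.choose (k + 1) : ℝ) * s ^ k /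
          (Nat.factorial k : ℝ)|) = ∫ a, f a * g a ∂μ := by
    refine setIntegral_congr_fun measurableSet_Ioi fun s _ => ?_
    rw [PP_eq m s]
    simp only [hf, hg]
    rw [← mul_assoc, ← Real.exp_add]
    congr 2
    ring
  rw [hLHS]
  refine hCS.trans ?_
  rw [hIf, hIg, Real.one_rpow, one_mul, ← Real.sqrt_eq_rpow]
  nlinarith [Real.sqrt_nonneg (m:ℝ)]
end
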